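/- arXiv:1806.01009 — 8 statements merged into one kernel-verified Lean document; each statement's English description precedes it below -/
import Mathlib

section
/- Let X ∈ ℝ^{n×n} be the lower-triangular matrix of ones (the path matrix of the path graph rooted at vertex 1), let S ⊆ {2,…,n}, and let j ∉ {1} ∪ S. Define j⁻ = max{i < j : i ∈ {1} ∪ S} and j⁺ = min{i > j : i ∈ S ∪ {n+1}} with the convention X_{n+1} = 0. Then the squared distance of the column X_j from the span of the columns {X_i : i ∈ {1} ∪ S} equals (j⁺ - j)(j - j⁻)/(j⁺ - j⁻). -/
lemma aux_quad (A B g : ℝ) (hA : 0 < A) (hB : 0 < B) :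
    B * A / (A + B) ≤ A * g ^ 2 + B * (1 - g) ^ 2 := by
  rw [div_le_iff₀ (by linarith)]
  nlinarith [sq_nonneg (A * g - B * (1 - g))]

/-- Localizing projections on the path graph: the squared distance of column `X_j`
(of the lower-triangular matrix of ones) from the span of the columns indexed by
`{1} ∪ S` equals `(j⁺ - j)(j - j⁻)/(j⁺ - j⁻)`, where `j⁻` and `j⁺` are the nearest
indices in `{1} ∪ S` below `j` and in `S ∪ {n+1}` above `j`. -/
theorem stmt3 (n : ℕ) (S : Finset ℕ) (hS : S ⊆ Finset.Icc 2 n)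
    (j : ℕ) (hj1 : 1 ≤ j) (hjn : j ≤ n) (hjS : j ∉ insert 1 S)
    (jm : ℕ) (hjm : jm ∈ insert 1 S) (hjml : jm < j)
    (hjmmax : ∀ i ∈ insert 1 S, i < j → i ≤ jm)
    (jp : ℕ) (hjp : jp ∈ insert (n+1) S) (hjpg : j < jp)
    (hjpmin : ∀ i ∈ insert (n+1) S, j < i → jp ≤ i)
    (col : ℕ → Fin n → ℝ)
    (hcol : ∀ k i, col k i = if k ≤ i.val + 1 then 1 else 0) :
    IsLeast {v : ℝ | ∃ θ : ℕ → ℝ,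
        v = ∑ i : Fin n, (col j i - ∑ k ∈ insert 1 S, θ k * col k i)^2}
      (((jp : ℝ) - j) * ((j : ℝ) - jm) / ((jp : ℝ) - jm)) := by
  classical
  have hjm1 : 1 ≤ jm := by
    rcases Finset.mem_insert.mp hjm with rfl | h
    · exact le_refl 1
    · exact le_trans (by norm_num) (Finset.mem_Icc.mp (hS h)).1
  have hjpn : jp ≤ n + 1 := by
    rcases Finset.mem_insert.mp hjp with rfl | h
    · exact le_refl _
    · exact le_trans (Finset.mem_Icc.mp (hS h)).2 (by omega)
  have hjS' : j ∉ S := fun h => hjS (Finset.mem_insert_of_mem h)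
  -- no element of insert 1 S lies strictly between jm and jp
  have hgap : ∀ k, k ∈ insert 1 S → k ≤ jm ∨ jp ≤ k := by
    intro k hk
    by_contra hcon
    push_neg at hcon
    obtain ⟨h1, h2⟩ := hcon
    rcases Finset.mem_insert.mp hk with rfl | hkS
    · omega
    · rcases lt_trichotomy k j with h | h | h
      · exact absurd (hjmmax k hk h) (by omega)
      · exact hjS' (h ▸ hkS)
      · exact absurd (hjpmin k (Finset.mem_insert_of_mem hkS) h) (by omega)
  have hfilter : ∀ r, jm ≤ r → r < jp →
      (insert 1 S).filter (fun k => k ≤ r) = (insert 1 S).filter (fun k => k ≤ jm) := by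
    intro r h1 h2
    ext k
    simp only [Finset.mem_filter]
    constructor
    · rintro ⟨hk, hkr⟩
      refine ⟨hk, ?_⟩
      rcases hgap k hk with h | h
      · exact h
      · omega
    · rintro ⟨hk, hkm⟩
      exact ⟨hk, by omega⟩
  have hsum : ∀ θ : ℕ → ℝ, ∀ i : Fin n,
      ∑ k ∈ insert 1 S, θ k * col k i
        = ∑ k ∈ (insert 1 S).filter (fun k => k ≤ i.val + 1), θ k := by
    intro θ i
    rw [Finset.sum_filter]
    apply Finset.sum_congr rfl
    intro k _
    rw [hcol]
    split_ifs <;> simp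
  have hmain : ∀ θ : ℕ → ℝ,
      ∑ i : Fin n, (col j i - ∑ k ∈ insert 1 S, θ k * col k i)^2
        = ∑ m ∈ Finset.range n, ((if j ≤ m + 1 then (1:ℝ) else 0)
            - ∑ k ∈ (insert 1 S).filter (fun k => k ≤ m + 1), θ k)^2 := by
    intro θ
    rw [← Fin.sum_univ_eq_sum_range (fun m => ((if j ≤ m + 1 then (1:ℝ) else 0)
        - ∑ k ∈ (insert 1 S).filter (fun k => k ≤ m + 1), θ k)^2) n]
    apply Finset.sum_congr rfl
    intro i _
    rw [hcol, hsum θ i]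
  have hcard1 : ((Finset.range n).filter (fun m => jm ≤ m + 1 ∧ m + 1 < j)).card = j - jm := by
    have h : (Finset.range n).filter (fun m => jm ≤ m + 1 ∧ m + 1 < j)
        = Finset.Ico (jm - 1) (j - 1) := by
      ext m
      simp only [Finset.mem_filter, Finset.mem_range, Finset.mem_Ico]
      omega
    rw [h, Nat.card_Ico]
    omega
  have hcard2 : ((Finset.range n).filter (fun m => j ≤ m + 1 ∧ m + 1 < jp)).card = jp - j := by
    have h : (Finset.range n).filter (fun m => j ≤ m + 1 ∧ m + 1 < jp)
        = Finset.Ico (j - 1) (jp - 1) := by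
      ext m
      simp only [Finset.mem_filter, Finset.mem_range, Finset.mem_Ico]
      omega
    rw [h, Nat.card_Ico]
    omega
  have hApos : (0:ℝ) < (j:ℝ) - jm := by
    have : (jm:ℝ) < j := by exact_mod_cast hjml
    linarith
  have hBpos : (0:ℝ) < (jp:ℝ) - j := by
    have : (j:ℝ) < jp := by exact_mod_cast hjpg
    linarith
  constructor
  · -- membership: exhibit the optimal θ
    set c : ℝ := ((jp:ℝ) - j) / ((jp:ℝ) - jm) with hc
    refine ⟨fun k => if k = jm then c else if k = jp then 1 - c else 0, ?_⟩
    rw [hmain]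
    have hjmne : jm ≠ jp := by omega
    -- value of the partial sums
    have hG0 : ∀ r : ℕ, r < jm →
        ∑ k ∈ (insert 1 S).filter (fun k => k ≤ r),
          (if k = jm then c else if k = jp then 1 - c else 0) = 0 := by
      intro r hr
      apply Finset.sum_eq_zero
      intro k hk
      simp only [Finset.mem_filter] at hk
      have h1 : k ≠ jm := by omega
      have h2 : k ≠ jp := by omega
      simp [h1, h2]
    have hGc : ∀ r : ℕ, jm ≤ r → r < jp →
        ∑ k ∈ (insert 1 S).filter (fun k => k ≤ r),
          (if k = jm then c else if k = jp then 1 - c else 0) = c := by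
      intro r h1 h2
      rw [hfilter r h1 h2]
      have : ∀ k ∈ (insert 1 S).filter (fun k => k ≤ jm),
          (if k = jm then c else if k = jp then 1 - c else 0)
            = if k = jm then c else 0 := by
        intro k hk
        simp only [Finset.mem_filter] at hk
        have h2 : k ≠ jp := by omega
        simp [h2]
      rw [Finset.sum_congr rfl this, Finset.sum_ite_eq' _ jm (fun _ => c)]
      have : jm ∈ (insert 1 S).filter (fun k => k ≤ jm) :=
        Finset.mem_filter.mpr ⟨hjm, le_refl _⟩
      simp [this]
    have hG1 : ∀ r : ℕ, jp ≤ r → r ≤ n →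
        ∑ k ∈ (insert 1 S).filter (fun k => k ≤ r),
          (if k = jm then c else if k = jp then 1 - c else 0) = 1 := by
      intro r h1 h2
      have hjpS : jp ∈ S := by
        rcases Finset.mem_insert.mp hjp with rfl | h
        · omega
        · exact h
      have hsplit : ∀ k, (if k = jm then c else if k = jp then 1 - c else 0)
          = (if k = jm then c else 0) + (if k = jp then 1 - c else 0) := by
        intro k
        by_cases hk1 : k = jm
        · subst hk1; simp [hjmne]
        · by_cases hk2 : k = jp <;> simp [hk1, hk2, hjmne, Ne.symm hjmne]
      rw [Finset.sum_congr rfl (fun k _ => hsplit k), Finset.sum_add_distrib,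
        Finset.sum_ite_eq' _ jm (fun _ => c), Finset.sum_ite_eq' _ jp (fun _ => 1 - c)]
      have hm : jm ∈ (insert 1 S).filter (fun k => k ≤ r) :=
        Finset.mem_filter.mpr ⟨hjm, by omega⟩
      have hp : jp ∈ (insert 1 S).filter (fun k => k ≤ r) :=
        Finset.mem_filter.mpr ⟨Finset.mem_insert_of_mem hjpS, h1⟩
      simp [hm, hp]
    have hFval : ∀ m ∈ Finset.range n,
        ((if j ≤ m + 1 then (1:ℝ) else 0)
            - ∑ k ∈ (insert 1 S).filter (fun k => k ≤ m + 1),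
              (if k = jm then c else if k = jp then 1 - c else 0))^2
          = (if jm ≤ m + 1 ∧ m + 1 < j then c^2 else 0)
            + (if j ≤ m + 1 ∧ m + 1 < jp then (1 - c)^2 else 0) := by
      intro m hm
      simp only [Finset.mem_range] at hm
      rcases lt_or_ge (m + 1) jm with h1 | h1
      · rw [hG0 _ h1, if_neg (by omega), if_neg (by omega), if_neg (by omega)]
        ring
      · rcases lt_or_ge (m + 1) j with h2 | h2
        · rw [hGc _ h1 (by omega), if_neg (by omega), if_pos ⟨h1, h2⟩, if_neg (by omega)]
          ring
        · rcases lt_or_ge (m + 1) jp with h3 | h3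
          · rw [hGc _ h1 h3, if_pos h2, if_neg (by omega), if_pos ⟨h2, h3⟩]
            ring
          · rw [hG1 _ h3 (by omega), if_pos h2, if_neg (by omega), if_neg (by omega)]
            ring
    rw [Finset.sum_congr rfl hFval, Finset.sum_add_distrib,
      ← Finset.sum_filter, ← Finset.sum_filter, Finset.sum_const, Finset.sum_const,
      hcard1, hcard2]
    have hjm' : ((j - jm : ℕ) : ℝ) = (j:ℝ) - jm := by
      push_cast [Nat.cast_sub (le_of_lt hjml)]; ring
    have hjp' : ((jp - j : ℕ) : ℝ) = (jp:ℝ) - j := by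
      push_cast [Nat.cast_sub (le_of_lt hjpg)]; ring
    rw [nsmul_eq_mul, nsmul_eq_mul, hjm', hjp', hc]
    have hAB : (0:ℝ) < (jp:ℝ) - jm := by linarith
    field_simp
    ring
  · -- lower bound
    rintro v ⟨θ, rfl⟩
    rw [hmain θ]
    set g : ℝ := ∑ k ∈ (insert 1 S).filter (fun k => k ≤ jm), θ k with hg
    set S1 := (Finset.range n).filter (fun m => jm ≤ m + 1 ∧ m + 1 < j) with hS1
    set S2 := (Finset.range n).filter (fun m => j ≤ m + 1 ∧ m + 1 < jp) with hS2
    have hdisj : Disjoint S1 S2 := by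
      rw [Finset.disjoint_left]
      intro m hm1 hm2
      simp only [hS1, hS2, Finset.mem_filter] at hm1 hm2
      omega
    have hsub : S1 ∪ S2 ⊆ Finset.range n := by
      apply Finset.union_subset <;> exact Finset.filter_subset _ _
    have hbound : ∑ m ∈ S1 ∪ S2, ((if j ≤ m + 1 then (1:ℝ) else 0)
          - ∑ k ∈ (insert 1 S).filter (fun k => k ≤ m + 1), θ k)^2
        ≤ ∑ m ∈ Finset.range n, ((if j ≤ m + 1 then (1:ℝ) else 0)
          - ∑ k ∈ (insert 1 S).filter (fun k => k ≤ m + 1), θ k)^2 := by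
      apply Finset.sum_le_sum_of_subset_of_nonneg hsub
      intro m _ _
      positivity
    refine le_trans ?_ hbound
    rw [Finset.sum_union hdisj]
    have hsum1 : ∑ m ∈ S1, ((if j ≤ m + 1 then (1:ℝ) else 0)
        - ∑ k ∈ (insert 1 S).filter (fun k => k ≤ m + 1), θ k)^2
        = (j - jm : ℕ) * g^2 := by
      rw [Finset.sum_congr rfl (g := fun _ => g^2) ?_, Finset.sum_const, ← hcard1, hS1,
        nsmul_eq_mul]
      intro m hm
      simp only [hS1, Finset.mem_filter, Finset.mem_range] at hm
      rw [hfilter (m + 1) hm.2.1 (by omega), if_neg (by omega), ← hg]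
      ring
    have hsum2 : ∑ m ∈ S2, ((if j ≤ m + 1 then (1:ℝ) else 0)
        - ∑ k ∈ (insert 1 S).filter (fun k => k ≤ m + 1), θ k)^2
        = (jp - j : ℕ) * (1 - g)^2 := by
      rw [Finset.sum_congr rfl (g := fun _ => (1 - g)^2) ?_, Finset.sum_const, ← hcard2, hS2,
        nsmul_eq_mul]
      intro m hm
      simp only [hS2, Finset.mem_filter, Finset.mem_range] at hm
      rw [hfilter (m + 1) (by omega) hm.2.2, if_pos hm.2.1, ← hg]
    rw [hsum1, hsum2]
    have hjm' : ((j - jm : ℕ) : ℝ) = (j:ℝ) - jm := by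
      push_cast [Nat.cast_sub (le_of_lt hjml)]; ring
    have hjp' : ((jp - j : ℕ) : ℝ) = (jp:ℝ) - j := by
      push_cast [Nat.cast_sub (le_of_lt hjpg)]; ring
    rw [hjm', hjp']
    have h := aux_quad ((j:ℝ) - jm) ((jp:ℝ) - j) g hApos hBpos
    have hEq : (j:ℝ) - jm + ((jp:ℝ) - j) = (jp:ℝ) - jm := by ring
    rw [hEq] at h
    exact h
end

section
/- Let X ∈ ℝ^{n×n} be the lower-triangular matrix of ones, S ⊆ {2,…,n}, and j ∉ {1} ∪ S with j < max(S). Define j⁻ and j⁺ as the nearest elements of {1} ∪ S below and above j respectively. The orthogonal projection of the column X_j onto the span of {X_i : i ∈ {1} ∪ S} equals ((j⁺ - j)/(j⁺ - j⁻))·X_{j⁻} + ((j - j⁻)/(j⁺ - j⁻))·X_{j⁺}; in particular the projection coefficients are supported on {j⁻, j⁺} and sum to 1. -/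
lemma sum_indic_aux (n m : ℕ) (h1 : 1 ≤ m) (h2 : m ≤ n) :
    ∑ i ∈ Finset.range n, (if m ≤ i + 1 then (1:ℝ) else 0) = (n:ℝ) - m + 1 := by
  induction n with
  | zero => omega
  | succ n ih =>
    rw [Finset.sum_range_succ]
    rcases Nat.lt_or_ge n m with h | h
    · have hm : m = n + 1 := by omega
      subst hm
      rw [if_pos le_rfl]
      have hz : ∑ i ∈ Finset.range n, (if n + 1 ≤ i + 1 then (1:ℝ) else 0) = 0 := by
        apply Finset.sum_eq_zero; intro i hi
        rw [if_neg]; simp only [Finset.mem_range] at hi; omega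
      rw [hz]; push_cast; ring
    · rw [ih h, if_pos (by omega)]; push_cast; ring

/-- For `j ∉ {1} ∪ S` with `j < max S`, the orthogonal projection of the column `X_j`
onto the span of the columns indexed by `{1} ∪ S` is
`((j⁺-j)/(j⁺-j⁻))·X_{j⁻} + ((j-j⁻)/(j⁺-j⁻))·X_{j⁺}`: the residual is orthogonal to all
columns indexed by `{1} ∪ S`, and the coefficients sum to 1. -/
theorem stmt4 (n : ℕ) (S : Finset ℕ) (hS : S ⊆ Finset.Icc 2 n) (hSne : S.Nonempty)
    (j : ℕ) (hj1 : 1 ≤ j) (hjn : j ≤ n) (hjS : j ∉ insert 1 S)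
    (hjmax : j < S.max' hSne)
    (jm jp : ℕ)
    (hjm : jm ∈ insert 1 S) (hjml : jm < j)
    (hjmmax : ∀ i ∈ insert 1 S, i < j → i ≤ jm)
    (hjp : jp ∈ S) (hjpg : j < jp) (hjpmin : ∀ i ∈ S, j < i → jp ≤ i)
    (col : ℕ → Fin n → ℝ)
    (hcol : ∀ k i, col k i = if k ≤ i.val + 1 then 1 else 0) :
    (∀ k ∈ insert 1 S, ∑ i : Fin n,
        (col j i - (((jp : ℝ) - j) / ((jp : ℝ) - jm) * col jm i
          + ((j : ℝ) - jm) / ((jp : ℝ) - jm) * col jp i)) * col k i = 0) ∧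
    ((jp : ℝ) - j) / ((jp : ℝ) - jm) + ((j : ℝ) - jm) / ((jp : ℝ) - jm) = 1 := by
  have hjmjp : jm < jp := lt_trans hjml hjpg
  have hden : (jp:ℝ) - jm ≠ 0 := by
    have : (jm:ℝ) < jp := by exact_mod_cast hjmjp
    linarith
  have hjm1 : 1 ≤ jm := by
    rcases Finset.mem_insert.mp hjm with h | h
    · omega
    · have := hS h; simp only [Finset.mem_Icc] at this; omega
  have hjpn : jp ≤ n := by
    have := hS hjp; simp only [Finset.mem_Icc] at this; omega
  have dot : ∀ p q : ℕ, 1 ≤ max p q → max p q ≤ n →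
      ∑ i : Fin n, col p i * col q i = (n:ℝ) - max p q + 1 := by
    intro p q h1 h2
    have : ∀ i : Fin n, col p i * col q i
        = (if max p q ≤ (i : ℕ) + 1 then (1:ℝ) else 0) := by
      intro i
      rw [hcol, hcol]
      split_ifs with ha hb hb <;> simp_all <;> omega
    simp only [this]
    rw [Fin.sum_univ_eq_sum_range (fun i => if max p q ≤ i + 1 then (1:ℝ) else 0)]
    exact sum_indic_aux n (max p q) h1 h2
  constructor
  · intro k hk
    have hk1 : 1 ≤ k := by
      rcases Finset.mem_insert.mp hk with h | h
      · omega
      · have := hS h; simp only [Finset.mem_Icc] at this; omega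
    have hkn : k ≤ n := by
      rcases Finset.mem_insert.mp hk with h | h
      · omega
      · have := hS h; simp only [Finset.mem_Icc] at this; omega
    have hkj : k ≠ j := fun h => hjS (h ▸ hk)
    have expand : ∑ i : Fin n,
        (col j i - (((jp : ℝ) - j) / ((jp : ℝ) - jm) * col jm i
          + ((j : ℝ) - jm) / ((jp : ℝ) - jm) * col jp i)) * col k i
        = (∑ i : Fin n, col j i * col k i)
          - ((jp : ℝ) - j) / ((jp : ℝ) - jm) * (∑ i : Fin n, col jm i * col k i)
          - ((j : ℝ) - jm) / ((jp : ℝ) - jm) * (∑ i : Fin n, col jp i * col k i) := by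
      rw [Finset.mul_sum, Finset.mul_sum, ← Finset.sum_sub_distrib,
        ← Finset.sum_sub_distrib]
      apply Finset.sum_congr rfl
      intro i _
      ring
    rw [expand]
    rcases lt_or_gt_of_ne hkj with hlt | hgt
    · have hkjm : k ≤ jm := hjmmax k hk hlt
      rw [dot j k (by omega) (by omega), dot jm k (by omega) (by omega),
        dot jp k (by omega) (by omega)]
      rw [max_eq_left (by omega), max_eq_left (by omega), max_eq_left (by omega)]
      have c1 : (jm:ℝ) < j := by exact_mod_cast hjml
      have c2 : (j:ℝ) < jp := by exact_mod_cast hjpg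
      field_simp
      ring
    · have hkS : k ∈ S := by
        rcases Finset.mem_insert.mp hk with h | h
        · omega
        · exact h
      have hjpk : jp ≤ k := hjpmin k hkS hgt
      rw [dot j k (by omega) (by omega), dot jm k (by omega) (by omega),
        dot jp k (by omega) (by omega)]
      rw [max_eq_right (by omega), max_eq_right (by omega), max_eq_right (by omega)]
      field_simp
      ring
  · field_simp
    ring
end

section
/- Let X ∈ ℝ^{n×n} be the lower-triangular matrix of ones, let S = {t_1 < … < t_s} ⊆ {2,…,n}, and define d_1 = t_1 - 1, d_j = t_j - t_{j-1} for 2 ≤ j ≤ s, and d_{s+1} = n - t_s + 1. Suppose d_1, d_{s+1} ≥ 2 and d_j ≥ 4 for 2 ≤ j ≤ s, and let u_j be integers with 2 ≤ u_j ≤ d_j - 2. Define the compatibility constant κ²(S) = min{(s+1)·‖Xβ‖₂²/n : β ∈ ℝ^n, ‖β_S‖₁ - ‖β_{-(({1}∪S))}‖₁ = 1}. Then κ²(S) ≥ ((s+1)/n)·(1/K) with K = 1/d_1 + Σ_{j=2}^s (1/u_j + 1/(d_j - u_j)) + 1/d_{s+1}. -/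
open Finset

lemma chain_mono (r : ℕ → ℕ) (a b : ℕ) (hab : a ≤ b)
    (h : ∀ j, a ≤ j → j < b → r j ≤ r (j+1)) : r a ≤ r b := by
  induction b, hab using Nat.le_induction with
  | base => exact le_refl _
  | succ m hm ih =>
      exact le_trans (ih (fun j hj hj2 => h j hj (by omega))) (h m hm (by omega))

lemma teleIoc (g : ℕ → ℝ) (r : ℕ → ℕ) (a b : ℕ) (hab : a ≤ b)
    (h : ∀ j, a ≤ j → j < b → r j ≤ r (j+1)) :
    ∑ j ∈ Finset.Icc (a+1) b, (∑ i ∈ Finset.Ioc (r (j-1)) (r j), g i)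
      = ∑ i ∈ Finset.Ioc (r a) (r b), g i := by
  induction b, hab using Nat.le_induction with
  | base => rw [Finset.Icc_eq_empty (by omega)]; simp
  | succ m hm ih =>
      rw [Finset.sum_Icc_succ_top (by omega), ih (fun j hj hj2 => h j hj (by omega))]
      simpa using Finset.sum_Ioc_consecutive g
        (chain_mono r a m hm (fun j hj hj2 => h j hj (by omega))) (h m hm (by omega))

lemma avg (β : ℕ → ℝ) (p a b : ℕ) (hab : a < b) (hap : a < p) (hpb : p ≤ b) :
    |∑ k ∈ Ioc 0 p, β k| ≤ (1/((b:ℝ) - a)) * ∑ q ∈ Ioc a b, |∑ k ∈ Ioc 0 q, β k|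
      + ∑ i ∈ Ioc (a+1) b, |β i| := by
  set f : ℕ → ℝ := fun i => ∑ k ∈ Ioc 0 i, β k with hf
  set T : ℝ := ∑ i ∈ Ioc (a+1) b, |β i| with hT
  have key : ∀ q ∈ Ioc a b, |f p| ≤ |f q| + T := by
    intro q hq
    rw [Finset.mem_Ioc] at hq
    rcases le_or_gt q p with hqp | hqp
    · have h1 : f q + ∑ i ∈ Ioc q p, β i = f p := Finset.sum_Ioc_consecutive β (by omega) hqp
      have h2 : |∑ i ∈ Ioc q p, β i| ≤ T := by
        refine le_trans (Finset.abs_sum_le_sum_abs _ _) ?_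
        refine Finset.sum_le_sum_of_subset_of_nonneg ?_ (fun i _ _ => abs_nonneg _)
        exact Finset.Ioc_subset_Ioc (by omega) (by omega)
      calc |f p| = |f q + ∑ i ∈ Ioc q p, β i| := by rw [h1]
        _ ≤ |f q| + |∑ i ∈ Ioc q p, β i| := abs_add_le _ _
        _ ≤ |f q| + T := by linarith
    · have h1 : f p + ∑ i ∈ Ioc p q, β i = f q := Finset.sum_Ioc_consecutive β (by omega) hqp.le
      have h2 : |∑ i ∈ Ioc p q, β i| ≤ T := by
        refine le_trans (Finset.abs_sum_le_sum_abs _ _) ?_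
        refine Finset.sum_le_sum_of_subset_of_nonneg ?_ (fun i _ _ => abs_nonneg _)
        exact Finset.Ioc_subset_Ioc (by omega) (by omega)
      have : |f p| ≤ |f q| + |∑ i ∈ Ioc p q, β i| := by
        have := abs_add_le (f q) (-(∑ i ∈ Ioc p q, β i))
        simp only [abs_neg] at this
        refine le_trans (le_of_eq ?_) this
        rw [← h1]; ring_nf
      linarith
  have hsum : ∑ q ∈ Ioc a b, |f p| ≤ (∑ q ∈ Ioc a b, |f q|) + (Ioc a b).card * T := by
    have := Finset.sum_le_sum key
    simpa [Finset.sum_add_distrib, mul_comm] using this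
  rw [Finset.sum_const, Nat.card_Ioc] at hsum
  set c : ℝ := ((b - a : ℕ) : ℝ) with hc
  have hc0 : (0:ℝ) < c := by
    rw [hc]; exact_mod_cast Nat.sub_pos_of_lt hab
  have hceq : c = (b:ℝ) - a := by rw [hc]; push_cast [Nat.le_of_lt hab]; ring
  have h3 : c * |f p| ≤ (∑ q ∈ Ioc a b, |f q|) + c * T := by
    simpa [nsmul_eq_mul, ← hc] using hsum
  rw [← hceq]
  have h4 : |f p| ≤ ((∑ q ∈ Ioc a b, |f q|) + c * T) / c := by
    rw [le_div_iff₀ hc0]; linarith [h3]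
  refine le_trans h4 (le_of_eq ?_)
  field_simp
  ring

lemma blockbd (K c S Q : ℝ) (hK : 0 < K) (hc : 0 < c) (hQ : S^2 ≤ c * Q) :
    (1/c) * S ≤ (1/c)/(2*K) + (K/2) * Q := by
  have h2 : 0 ≤ 1 + K^2 * (c*Q) - 2*K*S := by nlinarith [sq_nonneg (K*S - 1), sq_nonneg K]
  rw [← sub_nonneg]
  have : (1/c)/(2*K) + (K/2) * Q - (1/c) * S = (1 + K^2*(c*Q) - 2*K*S) / (2*K*c) := by
    field_simp
  rw [this]
  positivity

set_option maxHeartbeats 3000000 in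
/-- Lower bound on the compatibility constant for the path graph: for every `β`
satisfying the compatibility constraint `‖β_S‖₁ - ‖β_{-({1}∪S)}‖₁ = 1`, one has
`(s+1)·‖Xβ‖₂²/n ≥ ((s+1)/n)·(1/K)`, where `X` is the lower-triangular matrix of ones
(so `(Xβ)_i = Σ_{k ≤ i} β_k`) and
`K = 1/d₁ + Σ_{j=2}^s (1/u_j + 1/(d_j - u_j)) + 1/d_{s+1}`. -/
theorem stmt9 (n s : ℕ) (hs : 1 ≤ s)
    (t : ℕ → ℕ)
    (ht : ∀ j, 2 ≤ j → j ≤ s → t (j-1) < t j)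
    (htmem : ∀ j, 1 ≤ j → j ≤ s → 2 ≤ t j ∧ t j ≤ n)
    (d u : ℕ → ℕ)
    (hd1 : d 1 = t 1 - 1)
    (hdj : ∀ j, 2 ≤ j → j ≤ s → d j = t j - t (j-1))
    (hds : d (s+1) = n - t s + 1)
    (hd1b : 2 ≤ d 1) (hdsb : 2 ≤ d (s+1))
    (hdjb : ∀ j, 2 ≤ j → j ≤ s → 4 ≤ d j)
    (hu : ∀ j, 2 ≤ j → j ≤ s → 2 ≤ u j ∧ u j ≤ d j - 2)
    (β : ℕ → ℝ)
    (hconstr : ∑ j ∈ Finset.Icc 1 s, |β (t j)|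
        - ∑ i ∈ Finset.Icc 2 n \ (Finset.Icc 1 s).image t, |β i| = 1) :
    ((s : ℝ) + 1) / n *
        (1 / (1 / (d 1 : ℝ)
          + (∑ j ∈ Finset.Icc 2 s, (1 / (u j : ℝ) + 1 / ((d j : ℝ) - (u j : ℝ))))
          + 1 / (d (s+1) : ℝ)))
      ≤ ((s : ℝ) + 1) * (∑ i ∈ Finset.Icc 1 n, (∑ k ∈ Finset.Icc 1 i, β k)^2) / n := by
  classical
  -- basic integer facts
  have ht1 : 2 ≤ t 1 := (htmem 1 le_rfl hs).1
  have htsn : t s ≤ n := (htmem s hs le_rfl).2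
  have hts2 : 2 ≤ t s := (htmem s hs le_rfl).1
  have hmono : ∀ k l, 1 ≤ k → k < l → l ≤ s → t k < t l := by
    have H : ∀ l, l ≤ s → ∀ k, 1 ≤ k → k < l → t k < t l := by
      intro l
      induction l with
      | zero => omega
      | succ m ih =>
          intro hls k hk hkl
          rcases eq_or_lt_of_le (Nat.lt_succ_iff.mp hkl) with h|h
          · subst h
            have := ht (k+1) (by omega) (by omega)
            simpa using this
          · have h1 := ih (by omega) k hk h
            have h2 := ht (m+1) (by omega) hls
            simp only [Nat.add_sub_cancel] at h2
            omega
    exact fun k l hk hkl hl => H l hl k hk hkl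
  have hmono' : ∀ k l, 1 ≤ k → k ≤ l → l ≤ s → t k ≤ t l := by
    intro k l hk hkl hl
    rcases eq_or_lt_of_le hkl with h | h
    · subst h; exact le_rfl
    · exact (hmono k l hk h hl).le
  have hIcc : ∀ x : ℕ, Finset.Icc 1 x = Finset.Ioc 0 x := by
    intro x; ext y; simp [Finset.mem_Icc, Finset.mem_Ioc]; omega
  set K : ℝ := 1 / (d 1 : ℝ)
          + (∑ j ∈ Finset.Icc 2 s, (1 / (u j : ℝ) + 1 / ((d j : ℝ) - (u j : ℝ))))
          + 1 / (d (s+1) : ℝ) with hKdef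
  clear_value K
  -- per-j facts for j ∈ Icc 2 s
  have hjfacts : ∀ j ∈ Finset.Icc 2 s, 2 ≤ t (j-1) ∧ t (j-1) + u j + 2 ≤ t j
      ∧ 2 ≤ u j ∧ t j ≤ n ∧ d j = t j - t (j-1) := by
    intro j hj
    rw [Finset.mem_Icc] at hj
    have h1 : 2 ≤ t (j-1) := (htmem (j-1) (by omega) (by omega)).1
    have h2 : t (j-1) < t j := ht j hj.1 hj.2
    have h3 := hdj j hj.1 hj.2
    have h4 := hdjb j hj.1 hj.2
    have h5 := hu j hj.1 hj.2
    have h6 : t j ≤ n := (htmem j (by omega) hj.2).2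
    refine ⟨h1, by omega, h5.1, h6, h3⟩
  have hKpos : 0 < K := by
    have h1 : (0:ℝ) < 1/(d 1 : ℝ) := by
      have : (0:ℝ) < (d 1 : ℝ) := by exact_mod_cast (by omega : 0 < d 1)
      positivity
    have h3 : (0:ℝ) < 1/(d (s+1) : ℝ) := by
      have : (0:ℝ) < (d (s+1) : ℝ) := by exact_mod_cast (by omega : 0 < d (s+1))
      positivity
    have h2 : (0:ℝ) ≤ ∑ j ∈ Finset.Icc 2 s, (1 / (u j : ℝ) + 1 / ((d j : ℝ) - (u j : ℝ))) := by
      refine Finset.sum_nonneg (fun j hj => ?_)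
      obtain ⟨hp2, hpq, hm2, hqn, hd⟩ := hjfacts j hj
      have hu0 : (0:ℝ) < (u j : ℝ) := by exact_mod_cast (by omega : 0 < u j)
      have hd0 : (0:ℝ) < (d j : ℝ) - (u j : ℝ) := by
        have h5 : (u j : ℝ) + 2 ≤ (d j : ℝ) := by exact_mod_cast (by omega : u j + 2 ≤ d j)
        linarith
      positivity
    rw [hKdef]; linarith
  -- ============ STEP A ============
  have hβj : ∀ j ∈ Finset.Icc 1 s, |β (t j)|
      ≤ |∑ k ∈ Ioc 0 (t j - 1), β k| + |∑ k ∈ Ioc 0 (t j), β k| := by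
    intro j hj
    rw [Finset.mem_Icc] at hj
    have h2 : 2 ≤ t j := (htmem j hj.1 hj.2).1
    have hsing : Finset.Ioc (t j - 1) (t j) = {t j} := by ext x; simp; omega
    have hsum : (∑ k ∈ Ioc 0 (t j - 1), β k) + (∑ k ∈ Ioc (t j - 1) (t j), β k)
        = ∑ k ∈ Ioc 0 (t j), β k := Finset.sum_Ioc_consecutive β (by omega) (by omega)
    rw [hsing, Finset.sum_singleton] at hsum
    have hb : β (t j) = (∑ k ∈ Ioc 0 (t j), β k) - (∑ k ∈ Ioc 0 (t j - 1), β k) := by linarith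
    rw [hb]
    have := abs_sub (∑ k ∈ Ioc 0 (t j), β k) (∑ k ∈ Ioc 0 (t j - 1), β k)
    linarith [this]
  -- increments fit into the off-support sum
  have hsubim : Finset.image t (Finset.Icc 1 s) ⊆ Finset.Icc 2 n := by
    intro x hx
    simp only [Finset.mem_image, Finset.mem_Icc] at hx ⊢
    obtain ⟨j, hj, rfl⟩ := hx
    exact ⟨(htmem j hj.1 hj.2).1, (htmem j hj.1 hj.2).2⟩
  have himg : ∑ x ∈ Finset.image t (Finset.Icc 1 s), |β x| = ∑ j ∈ Finset.Icc 1 s, |β (t j)| := by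
    rw [Finset.sum_image]
    intro x hx y hy hxy
    simp only [Finset.coe_Icc, Set.mem_Icc, Finset.mem_coe, Finset.mem_Icc] at hx hy
    by_contra hne
    rcases Nat.lt_or_ge x y with h|h
    · exact absurd hxy (Nat.ne_of_lt (hmono x y hx.1 h hy.2))
    · have hyx : y < x := by omega
      exact absurd hxy.symm (Nat.ne_of_lt (hmono y x hy.1 hyx hx.2))
  have hoff : ∑ i ∈ Finset.Icc 2 n \ Finset.image t (Finset.Icc 1 s), |β i|
      = (∑ i ∈ Finset.Icc 2 n, |β i|) - ∑ j ∈ Finset.Icc 1 s, |β (t j)| := by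
    rw [Finset.sum_sdiff_eq_sub hsubim, himg]
  have hincj : ∀ j ∈ Finset.Icc 2 s,
      (∑ i ∈ Ioc (t (j-1)) (t (j-1) + u j - 1), |β i|)
      + (∑ i ∈ Ioc (t (j-1) + u j) (t j - 1), |β i|)
      + |β (t j)| ≤ ∑ i ∈ Ioc (t (j-1)) (t j), |β i| := by
    intro j hj
    obtain ⟨hp2, hpq, hm2, hqn, hd⟩ := hjfacts j hj
    have e1 := Finset.sum_Ioc_consecutive (fun i => |β i|)
      (show t (j-1) ≤ t (j-1) + u j - 1 by omega) (show t (j-1) + u j - 1 ≤ t j - 1 by omega)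
    have e2 := Finset.sum_Ioc_consecutive (fun i => |β i|)
      (show t (j-1) ≤ t j - 1 by omega) (show t j - 1 ≤ t j by omega)
    have e3 : Finset.Ioc (t j - 1) (t j) = {t j} := by ext x; simp; omega
    have e4 : (∑ i ∈ Ioc (t (j-1) + u j) (t j - 1), |β i|)
        ≤ ∑ i ∈ Ioc (t (j-1) + u j - 1) (t j - 1), |β i| :=
      Finset.sum_le_sum_of_subset_of_nonneg
        (Finset.Ioc_subset_Ioc (by omega) le_rfl) (fun _ _ _ => abs_nonneg _)
    rw [e3, Finset.sum_singleton] at e2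
    linarith [e1, e2, e4]
  have htel1 : ∑ j ∈ Finset.Icc 2 s, (∑ i ∈ Ioc (t (j-1)) (t j), |β i|)
      = ∑ i ∈ Ioc (t 1) (t s), |β i| := by
    have := teleIoc (fun i => |β i|) t 1 s hs
      (fun j hj hj2 => hmono' j (j+1) hj (by omega) (by omega))
    simpa using this
  have hinc1 : (∑ i ∈ Ioc 1 (t 1 - 1), |β i|) + |β (t 1)| ≤ ∑ i ∈ Ioc 1 (t 1), |β i| := by
    have e1 := Finset.sum_Ioc_consecutive (fun i => |β i|)
      (show (1:ℕ) ≤ t 1 - 1 by omega) (show t 1 - 1 ≤ t 1 by omega)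
    have e3 : Finset.Ioc (t 1 - 1) (t 1) = {t 1} := by ext x; simp; omega
    rw [e3, Finset.sum_singleton] at e1
    linarith [e1]
  have hchain : (∑ i ∈ Ioc 1 (t 1), |β i|) + (∑ i ∈ Ioc (t 1) (t s), |β i|)
      + (∑ i ∈ Ioc (t s) n, |β i|) = ∑ i ∈ Finset.Icc 2 n, |β i| := by
    have c1 := Finset.sum_Ioc_consecutive (fun i => |β i|)
      (show (1:ℕ) ≤ t 1 by omega) (hmono' 1 s le_rfl hs le_rfl)
    have c2 := Finset.sum_Ioc_consecutive (fun i => |β i|)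
      (show (1:ℕ) ≤ t s by omega) htsn
    rw [show Finset.Icc 2 n = Finset.Ioc 1 n from by ext x; simp; omega]
    linarith [c1, c2]
  have hSB : ∑ j ∈ Finset.Icc 1 s, |β (t j)| = |β (t 1)| + ∑ j ∈ Finset.Icc 2 s, |β (t j)| := by
    rw [show Finset.Icc 1 s = insert 1 (Finset.Icc 2 s) from by ext x; simp; omega,
       Finset.sum_insert (by simp)]
  have hsumj := Finset.sum_le_sum hincj
  rw [htel1] at hsumj
  simp only [Finset.sum_add_distrib] at hsumj
  have hIncTotal : (∑ i ∈ Ioc 1 (t 1 - 1), |β i|)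
      + ((∑ j ∈ Finset.Icc 2 s, ∑ i ∈ Ioc (t (j-1)) (t (j-1) + u j - 1), |β i|)
        + (∑ j ∈ Finset.Icc 2 s, ∑ i ∈ Ioc (t (j-1) + u j) (t j - 1), |β i|))
      + (∑ i ∈ Ioc (t s) n, |β i|)
      ≤ ∑ i ∈ Finset.Icc 2 n \ Finset.image t (Finset.Icc 1 s), |β i| := by
    rw [hoff]
    linarith [hinc1, hsumj, hchain, hSB]
  -- averaging bounds
  have hA1 : |∑ k ∈ Ioc 0 (t 1 - 1), β k|
      ≤ 1/(d 1:ℝ) * (∑ i ∈ Ioc 0 (t 1 - 1), |∑ k ∈ Ioc 0 i, β k|)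
        + ∑ i ∈ Ioc 1 (t 1 - 1), |β i| := by
    have h := avg β (t 1 - 1) 0 (t 1 - 1) (by omega) (by omega) le_rfl
    norm_num at h
    rw [show (d 1:ℝ) = ((t 1 - 1 : ℕ):ℝ) from by rw [hd1], one_div]
    exact h
  have hAlast : |∑ k ∈ Ioc 0 (t s), β k|
      ≤ 1/(d (s+1):ℝ) * (∑ i ∈ Ioc (t s - 1) n, |∑ k ∈ Ioc 0 i, β k|)
        + ∑ i ∈ Ioc (t s) n, |β i| := by
    have h := avg β (t s) (t s - 1) n (by omega) (by omega) htsn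
    rw [show t s - 1 + 1 = t s from by omega] at h
    have e : ((n:ℝ) - ((t s - 1 : ℕ):ℝ)) = (d (s+1):ℝ) := by
      rw [hds]
      have h1 : (1:ℕ) ≤ t s := by omega
      have h2 : t s ≤ n := htsn
      push_cast [h1, h2]
      ring
    rw [e] at h
    exact h
  have hjavg : ∀ j ∈ Finset.Icc 2 s,
      |∑ k ∈ Ioc 0 (t j - 1), β k| + |∑ k ∈ Ioc 0 (t (j-1)), β k|
      ≤ (1/(u j:ℝ) * (∑ i ∈ Ioc (t (j-1) - 1) (t (j-1) + u j - 1), |∑ k ∈ Ioc 0 i, β k|)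
          + ∑ i ∈ Ioc (t (j-1)) (t (j-1) + u j - 1), |β i|)
        + (1/((d j:ℝ) - (u j:ℝ)) * (∑ i ∈ Ioc (t (j-1) + u j - 1) (t j - 1), |∑ k ∈ Ioc 0 i, β k|)
          + ∑ i ∈ Ioc (t (j-1) + u j) (t j - 1), |β i|) := by
    intro j hj
    obtain ⟨hp2, hpq, hm2, hqn, hd⟩ := hjfacts j hj
    have hR := avg β (t (j-1)) (t (j-1) - 1) (t (j-1) + u j - 1) (by omega) (by omega) (by omega)
    rw [show t (j-1) - 1 + 1 = t (j-1) from by omega] at hR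
    have eR : ((t (j-1) + u j - 1 : ℕ):ℝ) - ((t (j-1) - 1 : ℕ):ℝ) = (u j:ℝ) := by
      have h1 : (1:ℕ) ≤ t (j-1) := by omega
      have h2 : (1:ℕ) ≤ t (j-1) + u j := by omega
      push_cast [h1, h2]
      ring
    rw [eR] at hR
    have hL := avg β (t j - 1) (t (j-1) + u j - 1) (t j - 1) (by omega) (by omega) le_rfl
    rw [show t (j-1) + u j - 1 + 1 = t (j-1) + u j from by omega] at hL
    have eL : ((t j - 1 : ℕ):ℝ) - ((t (j-1) + u j - 1 : ℕ):ℝ) = (d j:ℝ) - (u j:ℝ) := by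
      have h1 : (1:ℕ) ≤ t j := by omega
      have h2 : (1:ℕ) ≤ t (j-1) + u j := by omega
      have h3 : (d j : ℝ) = ((t j - t (j-1) : ℕ):ℝ) := by rw [hd]
      have h4 : t (j-1) ≤ t j := by omega
      rw [h3]
      push_cast [h1, h2, h4]
      ring
    rw [eL] at hL
    linarith [hR, hL]
  -- sum splitting
  have hre : ∑ j ∈ Finset.Icc 1 (s-1), |∑ k ∈ Ioc 0 (t j), β k|
      = ∑ j ∈ Finset.Icc 2 s, |∑ k ∈ Ioc 0 (t (j-1)), β k| := by
    rw [show Finset.Icc 2 s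
        = Finset.map ⟨fun x => x+1, add_left_injective 1⟩ (Finset.Icc 1 (s-1)) from ?_,
      Finset.sum_map]
    · simp
    · ext x
      simp only [Finset.mem_map, Finset.mem_Icc, Function.Embedding.coeFn_mk]
      constructor
      · intro h; exact ⟨x-1, ⟨by omega, by omega⟩, show x - 1 + 1 = x from by omega⟩
      · rintro ⟨a, ha, rfl⟩
        exact ⟨show 2 ≤ a + 1 from by omega, show a + 1 ≤ s from by omega⟩
  have hFsplit : ∑ j ∈ Finset.Icc 1 s, (|∑ k ∈ Ioc 0 (t j - 1), β k| + |∑ k ∈ Ioc 0 (t j), β k|)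
      = (|∑ k ∈ Ioc 0 (t 1 - 1), β k| + |∑ k ∈ Ioc 0 (t s), β k|)
        + ((∑ j ∈ Finset.Icc 2 s, |∑ k ∈ Ioc 0 (t j - 1), β k|)
          + (∑ j ∈ Finset.Icc 2 s, |∑ k ∈ Ioc 0 (t (j-1)), β k|)) := by
    simp only [Finset.sum_add_distrib]
    have e1 : ∑ j ∈ Finset.Icc 1 s, |∑ k ∈ Ioc 0 (t j - 1), β k|
        = |∑ k ∈ Ioc 0 (t 1 - 1), β k| + ∑ j ∈ Finset.Icc 2 s, |∑ k ∈ Ioc 0 (t j - 1), β k| := by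
      rw [show Finset.Icc 1 s = insert 1 (Finset.Icc 2 s) from by ext x; simp; omega,
         Finset.sum_insert (by simp)]
    have e2 : ∑ j ∈ Finset.Icc 1 s, |∑ k ∈ Ioc 0 (t j), β k|
        = |∑ k ∈ Ioc 0 (t s), β k| + ∑ j ∈ Finset.Icc 1 (s-1), |∑ k ∈ Ioc 0 (t j), β k| := by
      rw [show Finset.Icc 1 s = insert s (Finset.Icc 1 (s-1)) from by ext x; simp; omega,
         Finset.sum_insert (by simp; omega)]
    rw [e1, e2, hre]
    ring
  have hjsum := Finset.sum_le_sum hjavg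
  simp only [Finset.sum_add_distrib] at hjsum
  have hFs := Finset.sum_le_sum hβj
  -- Step A conclusion
  have stepA : (1:ℝ)
      ≤ 1/(d 1:ℝ) * (∑ i ∈ Ioc 0 (t 1 - 1), |∑ k ∈ Ioc 0 i, β k|)
        + ((∑ j ∈ Finset.Icc 2 s,
              1/(u j:ℝ) * (∑ i ∈ Ioc (t (j-1) - 1) (t (j-1) + u j - 1), |∑ k ∈ Ioc 0 i, β k|))
          + (∑ j ∈ Finset.Icc 2 s,
              1/((d j:ℝ) - (u j:ℝ)) * (∑ i ∈ Ioc (t (j-1) + u j - 1) (t j - 1), |∑ k ∈ Ioc 0 i, β k|)))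
        + 1/(d (s+1):ℝ) * (∑ i ∈ Ioc (t s - 1) n, |∑ k ∈ Ioc 0 i, β k|) := by
    linarith [hconstr, hIncTotal, hFs, hFsplit, hA1, hAlast, hjsum]
  -- ============ STEP B ============
  have hsq : ∀ a b : ℕ, (∑ i ∈ Ioc a b, |∑ k ∈ Ioc 0 i, β k|)^2
      ≤ ((b - a:ℕ):ℝ) * ∑ i ∈ Ioc a b, (∑ k ∈ Ioc 0 i, β k)^2 := by
    intro a b
    have h := Finset.sum_mul_sq_le_sq_mul_sq (Ioc a b) (fun _ => (1:ℝ))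
      (fun i => |∑ k ∈ Ioc 0 i, β k|)
    simp only [one_mul, one_pow, sq_abs, Finset.sum_const, Nat.card_Ioc, nsmul_eq_mul,
      mul_one] at h
    exact h
  have hB1 : 1/(d 1:ℝ) * (∑ i ∈ Ioc 0 (t 1 - 1), |∑ k ∈ Ioc 0 i, β k|)
      ≤ (1/(d 1:ℝ))/(2*K) + K/2 * ∑ i ∈ Ioc 0 (t 1 - 1), (∑ k ∈ Ioc 0 i, β k)^2 := by
    have hq := hsq 0 (t 1 - 1)
    rw [Nat.sub_zero, show ((t 1 - 1:ℕ):ℝ) = (d 1:ℝ) from by rw [hd1]] at hq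
    have hc : (0:ℝ) < (d 1:ℝ) := by exact_mod_cast (by omega : 0 < d 1)
    exact blockbd K (d 1:ℝ) _ _ hKpos hc hq
  have hBlast : 1/(d (s+1):ℝ) * (∑ i ∈ Ioc (t s - 1) n, |∑ k ∈ Ioc 0 i, β k|)
      ≤ (1/(d (s+1):ℝ))/(2*K) + K/2 * ∑ i ∈ Ioc (t s - 1) n, (∑ k ∈ Ioc 0 i, β k)^2 := by
    have hq := hsq (t s - 1) n
    have e : ((n - (t s - 1):ℕ):ℝ) = (d (s+1):ℝ) := by
      rw [hds]
      push_cast [show t s - 1 ≤ n from by omega, show 1 ≤ t s from by omega, htsn]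
      ring
    rw [e] at hq
    have hc : (0:ℝ) < (d (s+1):ℝ) := by exact_mod_cast (by omega : 0 < d (s+1))
    exact blockbd K _ _ _ hKpos hc hq
  have hBj : ∀ j ∈ Finset.Icc 2 s,
      1/(u j:ℝ) * (∑ i ∈ Ioc (t (j-1) - 1) (t (j-1) + u j - 1), |∑ k ∈ Ioc 0 i, β k|)
        + 1/((d j:ℝ) - (u j:ℝ)) * (∑ i ∈ Ioc (t (j-1) + u j - 1) (t j - 1), |∑ k ∈ Ioc 0 i, β k|)
      ≤ (1 / (u j : ℝ) + 1 / ((d j : ℝ) - (u j : ℝ)))/(2*K)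
        + K/2 * ∑ i ∈ Ioc (t (j-1) - 1) (t j - 1), (∑ k ∈ Ioc 0 i, β k)^2 := by
    intro j hj
    obtain ⟨hp2, hpq, hm2, hqn, hd⟩ := hjfacts j hj
    have hq1 := hsq (t (j-1) - 1) (t (j-1) + u j - 1)
    rw [show t (j-1) + u j - 1 - (t (j-1) - 1) = u j from by omega] at hq1
    have hcu : (0:ℝ) < (u j:ℝ) := by exact_mod_cast (by omega : 0 < u j)
    have b1 := blockbd K (u j:ℝ) _ _ hKpos hcu hq1
    have hq2 := hsq (t (j-1) + u j - 1) (t j - 1)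
    rw [show t j - 1 - (t (j-1) + u j - 1) = d j - u j from by omega] at hq2
    have e2 : ((d j - u j:ℕ):ℝ) = (d j:ℝ) - (u j:ℝ) := by
      push_cast [show u j ≤ d j from by omega]
      ring
    rw [e2] at hq2
    have hcd : (0:ℝ) < (d j:ℝ) - (u j:ℝ) := by
      have h5 : (u j:ℝ) + 2 ≤ (d j:ℝ) := by exact_mod_cast (by omega : u j + 2 ≤ d j)
      linarith
    have b2 := blockbd K ((d j:ℝ) - (u j:ℝ)) _ _ hKpos hcd hq2
    have hsplit := Finset.sum_Ioc_consecutive (fun i => (∑ k ∈ Ioc 0 i, β k)^2)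
      (show t (j-1) - 1 ≤ t (j-1) + u j - 1 by omega) (show t (j-1) + u j - 1 ≤ t j - 1 by omega)
    have hsplit2 : K/2 * (∑ i ∈ Ioc (t (j-1) - 1) (t (j-1) + u j - 1), (∑ k ∈ Ioc 0 i, β k)^2)
        + K/2 * (∑ i ∈ Ioc (t (j-1) + u j - 1) (t j - 1), (∑ k ∈ Ioc 0 i, β k)^2)
        = K/2 * (∑ i ∈ Ioc (t (j-1) - 1) (t j - 1), (∑ k ∈ Ioc 0 i, β k)^2) := by
      rw [← hsplit]; ring
    have heq : 1/(u j:ℝ)/(2*K) + 1/((d j:ℝ)-(u j:ℝ))/(2*K)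
        = (1 / (u j : ℝ) + 1 / ((d j : ℝ) - (u j : ℝ)))/(2*K) := by
      rw [← add_div]
    linarith [b1, b2, hsplit2, heq]
  have hBsum := Finset.sum_le_sum hBj
  simp only [Finset.sum_add_distrib, ← Finset.sum_div, ← Finset.mul_sum] at hBsum
  have htelG : ∑ j ∈ Finset.Icc 2 s, (∑ i ∈ Ioc (t (j-1) - 1) (t j - 1), (∑ k ∈ Ioc 0 i, β k)^2)
      = ∑ i ∈ Ioc (t 1 - 1) (t s - 1), (∑ k ∈ Ioc 0 i, β k)^2 := by
    have := teleIoc (fun i => (∑ k ∈ Ioc 0 i, β k)^2) (fun k => t k - 1) 1 s hs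
      (fun j hj hj2 => by
        have h := hmono' j (j+1) hj (by omega) (by omega)
        show t j - 1 ≤ t (j+1) - 1
        omega)
    simpa using this
  have hVsplit : (∑ i ∈ Ioc 0 (t 1 - 1), (∑ k ∈ Ioc 0 i, β k)^2)
      + (∑ i ∈ Ioc (t 1 - 1) (t s - 1), (∑ k ∈ Ioc 0 i, β k)^2)
      + (∑ i ∈ Ioc (t s - 1) n, (∑ k ∈ Ioc 0 i, β k)^2)
      = ∑ i ∈ Ioc 0 n, (∑ k ∈ Ioc 0 i, β k)^2 := by
    have hc1 := Finset.sum_Ioc_consecutive (fun i => (∑ k ∈ Ioc 0 i, β k)^2)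
      (show (0:ℕ) ≤ t 1 - 1 by omega)
      (show t 1 - 1 ≤ t s - 1 from by have := hmono' 1 s le_rfl hs le_rfl; omega)
    have hc2 := Finset.sum_Ioc_consecutive (fun i => (∑ k ∈ Ioc 0 i, β k)^2)
      (show (0:ℕ) ≤ t s - 1 by omega) (show t s - 1 ≤ n by omega)
    linarith [hc1, hc2]
  have hKsum : (1/(d 1:ℝ))/(2*K)
      + (∑ j ∈ Finset.Icc 2 s, (1 / (u j : ℝ) + 1 / ((d j : ℝ) - (u j : ℝ))))/(2*K)
      + (1/(d (s+1):ℝ))/(2*K) = 1/2 := by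
    rw [← add_div, ← add_div, ← hKdef]
    have h2K : (0:ℝ) < 2*K := by linarith
    rw [div_eq_div_iff h2K.ne' (by norm_num : (2:ℝ) ≠ 0)]
    ring
  have hmid : K/2 * (∑ j ∈ Finset.Icc 2 s, (∑ i ∈ Ioc (t (j-1) - 1) (t j - 1), (∑ k ∈ Ioc 0 i, β k)^2))
      = K/2 * (∑ i ∈ Ioc (t 1 - 1) (t s - 1), (∑ k ∈ Ioc 0 i, β k)^2) := by
    rw [htelG]
  have hVK : K/2 * (∑ i ∈ Ioc 0 (t 1 - 1), (∑ k ∈ Ioc 0 i, β k)^2)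
      + K/2 * (∑ i ∈ Ioc (t 1 - 1) (t s - 1), (∑ k ∈ Ioc 0 i, β k)^2)
      + K/2 * (∑ i ∈ Ioc (t s - 1) n, (∑ k ∈ Ioc 0 i, β k)^2)
      = K/2 * (∑ i ∈ Ioc 0 n, (∑ k ∈ Ioc 0 i, β k)^2) := by
    rw [← hVsplit]
    ring
  have hw2 : ((∑ x ∈ Finset.Icc 2 s, 1/(u x:ℝ)) + ∑ x ∈ Finset.Icc 2 s, 1/((d x:ℝ)-(u x:ℝ)))/(2*K)
      = (∑ j ∈ Finset.Icc 2 s, (1 / (u j : ℝ) + 1 / ((d j : ℝ) - (u j : ℝ))))/(2*K) := by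
    rw [← Finset.sum_add_distrib]
  have hmain : 1 ≤ 1/2 + K/2 * (∑ i ∈ Ioc 0 n, (∑ k ∈ Ioc 0 i, β k)^2) := by
    linarith [stepA, hB1, hBlast, hBsum, hKsum, hmid, hVK, hw2]
  have hKV : 1 ≤ K * (∑ i ∈ Ioc 0 n, (∑ k ∈ Ioc 0 i, β k)^2) := by linarith [hmain]
  have h1K : 1/K ≤ ∑ i ∈ Ioc 0 n, (∑ k ∈ Ioc 0 i, β k)^2 := by
    rw [div_le_iff₀ hKpos]
    linarith [hKV]
  have hn0 : (0:ℝ) < n := by exact_mod_cast (by omega : 0 < n)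
  have hcn : (0:ℝ) < ((s:ℝ)+1)/n := by positivity
  simp only [hIcc]
  calc ((s : ℝ) + 1) / n * (1/K)
      ≤ ((s:ℝ)+1)/n * (∑ i ∈ Ioc 0 n, (∑ k ∈ Ioc 0 i, β k)^2) :=
        mul_le_mul_of_nonneg_left h1K hcn.le
    _ = ((s : ℝ) + 1) * (∑ i ∈ Ioc 0 n, (∑ k ∈ Ioc 0 i, β k)^2) / n := by ring
end

section
/- In the setting of the compatibility constant lower bound for the path graph, if additionally d_j is even for all 2 ≤ j ≤ s and one takes u_j = d_j/2, then the bound is attained: κ²(S) = ((s+1)/n)·(1/K) with K = 1/d_1 + Σ_{j=2}^s 4/d_j + 1/d_{s+1}. Equality is realized by the piecewise-constant function f* which equals -n/d_1 on the first d_1 coordinates, alternates sign with value (-1)^j · 2n/d_j on the j-th block of length d_j for 2 ≤ j ≤ s, and equals (-1)^{s+1}·n/d_{s+1} on the last d_{s+1} coordinates. -/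
open Finset

theorem my_tele (β : ℕ → ℝ) (a b : ℕ) (h : a ≤ b) :
    |(∑ k ∈ Icc 1 b, β k) - ∑ k ∈ Icc 1 a, β k| ≤ ∑ i ∈ Ioc a b, |β i| := by
  have h1 : ∀ m : ℕ, Icc 1 m = Ioc 0 m := fun m => rfl
  rw [h1, h1, ← Finset.sum_Ioc_consecutive β (Nat.zero_le a) h]
  simp only [add_sub_cancel_left]
  exact Finset.abs_sum_le_sum_abs _ _

theorem my_chain (q : ℕ → ℕ) (m : ℕ) (hm : ∀ j, 1 ≤ j → j ≤ m → q j ≤ q (j+1)) :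
    q 1 ≤ q (m+1) := by
  induction m with
  | zero => exact le_rfl
  | succ k ihk => exact le_trans (ihk (fun j a b => hm j a (by omega))) (hm (k+1) (by omega) (by omega))

theorem my_consec (q : ℕ → ℕ) (g : ℕ → ℝ) (m : ℕ) (hm : ∀ j, 1 ≤ j → j ≤ m → q j ≤ q (j+1)) :
    ∑ j ∈ Icc 1 m, ∑ i ∈ Ioc (q j) (q (j+1)), g i = ∑ i ∈ Ioc (q 1) (q (m+1)), g i := by
  induction m with
  | zero => simp
  | succ m ih =>
    rw [Finset.sum_Icc_succ_top (by omega : 1 ≤ m+1),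
      ih (fun j h1 h2 => hm j h1 (by omega))]
    exact Finset.sum_Ioc_consecutive g (my_chain q m (fun j a b => hm j a (by omega)))
      (hm (m+1) (by omega) (by omega))

theorem my_consec' (q : ℕ → ℕ) (g : ℕ → ℝ) (m : ℕ) (hm : ∀ j, 1 ≤ j → j ≤ m → q (j-1) ≤ q j) :
    ∑ j ∈ Icc 1 m, ∑ i ∈ Ioc (q (j-1)) (q j), g i = ∑ i ∈ Ioc (q 0) (q m), g i := by
  have h := my_consec (fun j => q (j-1)) g m ?_
  · simpa using h
  · intro j h1 h2
    have h3 : j + 1 - 1 = j := by omega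
    simp only [h3]
    exact hm j h1 h2

theorem my_pairsum (g : ℕ → ℝ) (s : ℕ) (hs : 1 ≤ s) :
    ∑ j ∈ Icc 1 s, (g j + g (j+1)) = g 1 + g (s+1) + 2 * ∑ j ∈ Icc 2 s, g j := by
  induction s with
  | zero => omega
  | succ k ih =>
    rcases Nat.eq_zero_or_pos k with h0 | h0
    · subst h0; simp
    · rw [Finset.sum_Icc_succ_top (by omega : 1 ≤ k+1), ih h0,
        Finset.sum_Icc_succ_top (by omega : 2 ≤ k+1)]
      ring

theorem my_findblk (T : ℕ → ℕ) (m : ℕ) : ∀ i, T 0 < i → i ≤ T m →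
    ∃ j, 1 ≤ j ∧ j ≤ m ∧ T (j-1) < i ∧ i ≤ T j := by
  induction m with
  | zero => intro i h1 h2; omega
  | succ m ih =>
    intro i h1 h2
    by_cases hc : i ≤ T m
    · obtain ⟨j, hj⟩ := ih i h1 hc
      exact ⟨j, by omega, by omega, hj.2.2⟩
    · exact ⟨m+1, by omega, le_rfl, by simpa using hc, h2⟩

set_option maxHeartbeats 2000000

/-- Tightness of the lower bound on the compatibility constant of the path graph when
all interior block lengths `d_j` are even and `u_j = d_j/2`: the compatibility constant
`κ²(S)` equals `((s+1)/n)·(1/K)` with `K = 1/d₁ + Σ_{j=2}^s 4/d_j + 1/d_{s+1}`, and the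
minimum is realized by (a scalar multiple of) the vector `β*` of jumps of the
piecewise-constant function `f*` with value `(-1)^j·2n/d_j` on the `j`-th block
(factor `1` instead of `2` on the extreme blocks). -/
theorem stmt10 (n s : ℕ) (hs : 1 ≤ s)
    (t : ℕ → ℕ)
    (ht : ∀ j, 2 ≤ j → j ≤ s → t (j-1) < t j)
    (htmem : ∀ j, 1 ≤ j → j ≤ s → 2 ≤ t j ∧ t j ≤ n)
    (d : ℕ → ℕ)
    (hd1 : d 1 = t 1 - 1)
    (hdj : ∀ j, 2 ≤ j → j ≤ s → d j = t j - t (j-1))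
    (hds : d (s+1) = n - t s + 1)
    (hd1b : 2 ≤ d 1) (hdsb : 2 ≤ d (s+1))
    (hdjb : ∀ j, 2 ≤ j → j ≤ s → 4 ≤ d j)
    (heven : ∀ j, 2 ≤ j → j ≤ s → d j % 2 = 0)
    (T : ℕ → ℕ) (hT : ∀ j, T j = ∑ k ∈ Finset.Icc 1 j, d k)
    (fstar : ℕ → ℝ)
    (hfstar : ∀ j, 1 ≤ j → j ≤ s+1 → ∀ i, T (j-1) < i → i ≤ T j →
      fstar i = (-1 : ℝ)^j * (if j = 1 ∨ j = s+1 then 1 else 2) * n / d j)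
    (βstar : ℕ → ℝ)
    (hβ1 : βstar 1 = fstar 1)
    (hβi : ∀ i, 2 ≤ i → βstar i = fstar i - fstar (i-1)) :
    IsLeast {v : ℝ | ∃ β : ℕ → ℝ,
        (∑ j ∈ Finset.Icc 1 s, |β (t j)|
          - ∑ i ∈ Finset.Icc 2 n \ (Finset.Icc 1 s).image t, |β i| = 1) ∧
        v = ((s : ℝ) + 1) * (∑ i ∈ Finset.Icc 1 n, (∑ k ∈ Finset.Icc 1 i, β k)^2) / n}
      (((s : ℝ) + 1) / n *
        (1 / (1 / (d 1 : ℝ) + (∑ j ∈ Finset.Icc 2 s, 4 / (d j : ℝ)) + 1 / (d (s+1) : ℝ)))) ∧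
    ∃ c : ℝ, c ≠ 0 ∧
      (∑ j ∈ Finset.Icc 1 s, |c * βstar (t j)|
        - ∑ i ∈ Finset.Icc 2 n \ (Finset.Icc 1 s).image t, |c * βstar i| = 1) ∧
      ((s : ℝ) + 1) * (∑ i ∈ Finset.Icc 1 n, (∑ k ∈ Finset.Icc 1 i, c * βstar k)^2) / n
        = ((s : ℝ) + 1) / n *
          (1 / (1 / (d 1 : ℝ) + (∑ j ∈ Finset.Icc 2 s, 4 / (d j : ℝ)) + 1 / (d (s+1) : ℝ))) := by
  classical
  set K : ℝ := 1 / (d 1 : ℝ) + (∑ j ∈ Finset.Icc 2 s, 4 / (d j : ℝ)) + 1 / (d (s+1) : ℝ) with hKdef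
  -- basic numeric facts
  have hdpos : ∀ j, 1 ≤ j → j ≤ s+1 → 1 ≤ d j := by
    intro j h1 h2
    rcases eq_or_ne j 1 with rfl | hj1
    · omega
    rcases eq_or_ne j (s+1) with rfl | hj2
    · omega
    · have := hdjb j (by omega) (by omega); omega
  -- T facts
  have hT0 : T 0 = 0 := by rw [hT]; simp
  have hTstep : ∀ j, T (j+1) = T j + d (j+1) := by
    intro j; rw [hT, hT, Finset.sum_Icc_succ_top (by omega : 1 ≤ j+1)]
  have hTmono : Monotone T := by
    intro a b hab
    rw [hT, hT]
    exact Finset.sum_le_sum_of_subset (Finset.Icc_subset_Icc le_rfl hab)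
  -- t = T + 1 on [1,s]
  have htT : ∀ j, 1 ≤ j → j ≤ s → t j = T j + 1 := by
    intro j
    induction j with
    | zero => omega
    | succ k ih =>
      intro _ hk
      rcases Nat.eq_zero_or_pos k with rfl | hk0
      · have := htmem 1 le_rfl hs
        have h1 : T 1 = d 1 := by have h := hTstep 0; rw [hT0] at h; simpa using h
        show t 1 = T 1 + 1
        omega
      · have hik := ih (by omega) (by omega)
        have h2 := ht (k+1) (by omega) hk
        have h3 := hdj (k+1) (by omega) hk
        have h4 := htmem k (by omega) (by omega)
        simp only [Nat.add_sub_cancel] at h2 h3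
        rw [hTstep k]
        omega
  have hTn : T (s+1) = n := by
    have h1 := htT s hs le_rfl
    have h2 := htmem s hs le_rfl
    rw [hTstep s]
    omega
  have hnpos : 0 < n := by
    have := htmem s hs le_rfl; omega
  have hTlt : ∀ j, 1 ≤ j → j ≤ s+1 → T (j-1) < T j := by
    intro j h1 h2
    have := hdpos j h1 h2
    have h3 := hTstep (j-1)
    have h4 : j - 1 + 1 = j := by omega
    rw [h4] at h3
    omega
  -- weight function
  set W : ℕ → ℝ := fun j => if j = 1 ∨ j = s+1 then 1 else 2 with hWdef
  have hW1 : W 1 = 1 := by simp [hWdef]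
  have hWs : W (s+1) = 1 := by simp [hWdef]
  have hWmid : ∀ j, 2 ≤ j → j ≤ s → W j = 2 := by
    intro j h1 h2; simp only [hWdef]; rw [if_neg]; omega
  have hWpos : ∀ j, 0 < W j := by
    intro j; simp only [hWdef]; split <;> norm_num
  have hdcast : ∀ j, 1 ≤ j → j ≤ s+1 → (0:ℝ) < (d j : ℝ) := by
    intro j h1 h2; exact_mod_cast hdpos j h1 h2
  -- split Icc 1 (s+1)
  have hsplitI : Finset.Icc 1 (s+1) = insert 1 (insert (s+1) (Finset.Icc 2 s)) := by
    ext x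
    simp only [Finset.mem_Icc, Finset.mem_insert]
    omega
  have hsumsplit : ∀ g : ℕ → ℝ, ∑ j ∈ Finset.Icc 1 (s+1), g j
      = g 1 + g (s+1) + ∑ j ∈ Finset.Icc 2 s, g j := by
    intro g
    rw [hsplitI, Finset.sum_insert, Finset.sum_insert]
    · ring
    · simp only [Finset.mem_Icc]; omega
    · simp only [Finset.mem_insert, Finset.mem_Icc]; omega
  have hKW : ∑ j ∈ Finset.Icc 1 (s+1), (W j)^2 / (d j : ℝ) = K := by
    rw [hsumsplit, hW1, hWs, hKdef]
    have : ∑ j ∈ Finset.Icc 2 s, (W j)^2 / (d j : ℝ) = ∑ j ∈ Finset.Icc 2 s, 4 / (d j : ℝ) := by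
      apply Finset.sum_congr rfl
      intro j hj
      simp only [Finset.mem_Icc] at hj
      rw [hWmid j hj.1 hj.2]; norm_num
    rw [this]; ring
  have hKpos : 0 < K := by
    have h1 : (0:ℝ) < (d 1 : ℝ) := hdcast 1 le_rfl (by omega)
    have h2 : (0:ℝ) < (d (s+1) : ℝ) := hdcast (s+1) (by omega) le_rfl
    have h3 : (0:ℝ) ≤ ∑ j ∈ Finset.Icc 2 s, 4 / (d j : ℝ) := by
      apply Finset.sum_nonneg
      intro j hj
      positivity
    rw [hKdef]
    have h4 : (0:ℝ) < 1 / (d 1 : ℝ) := by positivity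
    have h5 : (0:ℝ) < 1 / (d (s+1) : ℝ) := by positivity
    linarith
  have hKne : K ≠ 0 := ne_of_gt hKpos
  have hncast : (0:ℝ) < (n:ℝ) := by exact_mod_cast hnpos
  have hnne : (n:ℝ) ≠ 0 := ne_of_gt hncast
  -- t strict mono, injectivity
  have htlt : ∀ x y, 1 ≤ x → x < y → y ≤ s → t x < t y := by
    intro x y h1 h2 h3
    have ha := htT x h1 (by omega)
    have hb := htT y (by omega) h3
    have hc := hTlt y (by omega) (by omega)
    have hd' : T x ≤ T (y-1) := hTmono (by omega)
    omega
  have hinj : ∀ x ∈ Finset.Icc 1 s, ∀ y ∈ Finset.Icc 1 s, t x = t y → x = y := by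
    intro x hx y hy hxy
    simp only [Finset.mem_Icc] at hx hy
    by_contra hne
    rcases Nat.lt_or_ge x y with h | h
    · have := htlt x y hx.1 h hy.2; omega
    · have := htlt y x hy.1 (by omega) hx.2; omega
  have himg : (Finset.Icc 1 s).image t ⊆ Finset.Icc 2 n := by
    intro x hx
    simp only [Finset.mem_image, Finset.mem_Icc] at hx ⊢
    obtain ⟨j, hj, rfl⟩ := hx
    exact htmem j hj.1 hj.2
  have hOffsum : ∀ γ : ℕ → ℝ, ∑ i ∈ Finset.Icc 2 n \ (Finset.Icc 1 s).image t, γ i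
      = ∑ i ∈ Finset.Icc 2 n, γ i - ∑ j ∈ Finset.Icc 1 s, γ (t j) := by
    intro γ
    rw [Finset.sum_sdiff_eq_sub himg, Finset.sum_image hinj]
  -- partial sums of βstar give fstar
  have hF : ∀ i, 1 ≤ i → ∑ k ∈ Finset.Icc 1 i, βstar k = fstar i := by
    intro i
    induction i with
    | zero => omega
    | succ k ih =>
      intro _
      rcases Nat.eq_zero_or_pos k with rfl | hk0
      · simpa using hβ1
      · rw [Finset.sum_Icc_succ_top (by omega : 1 ≤ k+1), ih hk0, hβi (k+1) (by omega)]
        have h3 : k + 1 - 1 = k := by omega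
        rw [h3]; ring
  -- value of βstar at jumps
  have hred : ∀ j : ℕ, j + 1 - 1 = j := fun j => by omega
  have hβt : ∀ j, 1 ≤ j → j ≤ s → |βstar (t j)| = n * (W j / d j + W (j+1) / d (j+1)) := by
    intro j h1 h2
    have htj := htT j h1 h2
    have e1 : fstar (T j) = (-1:ℝ)^j * W j * n / d j := by
      have := hfstar j h1 (by omega) (T j) (hTlt j h1 (by omega)) le_rfl
      rwa [show (if j = 1 ∨ j = s+1 then (1:ℝ) else 2) = W j from rfl] at this
    have e2 : fstar (T j + 1) = (-1:ℝ)^(j+1) * W (j+1) * n / d (j+1) := by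
      have := hfstar (j+1) (by omega) (by omega) (T j + 1) ?_ ?_
      · rwa [show (if j+1 = 1 ∨ j+1 = s+1 then (1:ℝ) else 2) = W (j+1) from rfl] at this
      · rw [hred]; omega
      · rw [hTstep j]
        have := hdpos (j+1) (by omega) (by omega)
        omega
    have hb := hβi (t j) (by have := htmem j h1 h2; omega)
    rw [htj] at hb
    simp only [Nat.add_sub_cancel] at hb
    rw [htj, hb, e1, e2]
    have hdj1 : (0:ℝ) < d j := hdcast j h1 (by omega)
    have hdj2 : (0:ℝ) < d (j+1) := hdcast (j+1) (by omega) (by omega)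
    have hwj := hWpos j
    have hwj2 := hWpos (j+1)
    have hx : (-1:ℝ)^(j+1) = -(-1:ℝ)^j := by rw [pow_succ]; ring
    rw [hx]
    have hy : -(-1:ℝ)^j * W (j+1) * ↑n / ↑(d (j+1)) - (-1:ℝ)^j * W j * ↑n / ↑(d j)
        = (-1:ℝ)^j * (-(W (j+1) * ↑n / ↑(d (j+1)) + W j * ↑n / ↑(d j))) := by ring
    have hnn : (0:ℝ) ≤ W (j+1) * ↑n / ↑(d (j+1)) + W j * ↑n / ↑(d j) := by
      have a1 : (0:ℝ) ≤ W (j+1) * ↑n / ↑(d (j+1)) :=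
        div_nonneg (mul_nonneg hwj2.le (Nat.cast_nonneg n)) hdj2.le
      have a2 : (0:ℝ) ≤ W j * ↑n / ↑(d j) :=
        div_nonneg (mul_nonneg hwj.le (Nat.cast_nonneg n)) hdj1.le
      linarith
    rw [hy, abs_mul, abs_pow, abs_neg, abs_one, one_pow, one_mul, abs_neg,
      abs_of_nonneg hnn]
    ring
  -- βstar vanishes off S
  have hb0 : ∀ i ∈ Finset.Icc 2 n \ (Finset.Icc 1 s).image t, βstar i = 0 := by
    intro i hi
    simp only [Finset.mem_sdiff, Finset.mem_Icc, Finset.mem_image, not_exists] at hi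
    obtain ⟨⟨hi2, hin⟩, hnim⟩ := hi
    obtain ⟨j, hj1, hjs, hji1, hji2⟩ := my_findblk T (s+1) i (by omega) (by omega)
    have hne1 : i ≠ T (j-1) + 1 := by
      intro hcon
      rcases Nat.lt_or_ge j 2 with h | h
      · have hj1' : j = 1 := by omega
        rw [hj1'] at hcon
        simp only [Nat.sub_self, hT0] at hcon
        omega
      · exact hnim (j-1) ⟨by omega,
          by rw [htT (j-1) (by omega) (by omega)]; omega⟩
    have hb := hβi i hi2
    rw [hfstar j hj1 hjs i hji1 hji2,
      hfstar j hj1 hjs (i-1) (by omega) (by omega)] at hb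
    rw [hb, sub_self]
  -- sum of |βstar| at jumps
  have hKalt : W 1 / (d 1:ℝ) + W (s+1) / (d (s+1):ℝ)
      + 2 * ∑ j ∈ Finset.Icc 2 s, W j / (d j : ℝ) = K := by
    rw [hW1, hWs, hKdef]
    have : (2:ℝ) * ∑ j ∈ Finset.Icc 2 s, W j / (d j : ℝ)
        = ∑ j ∈ Finset.Icc 2 s, 4 / (d j : ℝ) := by
      rw [Finset.mul_sum]
      apply Finset.sum_congr rfl
      intro j hj
      simp only [Finset.mem_Icc] at hj
      rw [hWmid j hj.1 hj.2]; ring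
    rw [this]; ring
  have hAstar : ∑ j ∈ Finset.Icc 1 s, |βstar (t j)| = n * K := by
    rw [Finset.sum_congr rfl (fun j hj => by
      simp only [Finset.mem_Icc] at hj
      exact hβt j hj.1 hj.2)]
    rw [← Finset.mul_sum]
    rw [my_pairsum (fun j => W j / (d j:ℝ)) s hs]
    rw [← hKalt]
  -- sum of squares of fstar
  have hQstar : ∑ i ∈ Finset.Icc 1 n, (fstar i)^2 = (n:ℝ)^2 * K := by
    have hIccIoc : Finset.Icc 1 n = Finset.Ioc (T 0) (T (s+1)) := by
      rw [hT0, hTn]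
      rfl
    rw [hIccIoc, ← my_consec' T (fun i => (fstar i)^2) (s+1)
      (fun j h1 h2 => (hTlt j h1 h2).le)]
    rw [← hKW, Finset.mul_sum]
    apply Finset.sum_congr rfl
    intro j hj
    simp only [Finset.mem_Icc] at hj
    have hdj1 : (0:ℝ) < d j := hdcast j hj.1 hj.2
    have hcard : (Finset.Ioc (T (j-1)) (T j)).card = d j := by
      rw [Nat.card_Ioc]
      have h3 := hTstep (j-1)
      have h4 : j - 1 + 1 = j := by omega
      rw [h4] at h3
      omega
    have hval : ∀ i ∈ Finset.Ioc (T (j-1)) (T j),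
        (fstar i)^2 = (W j)^2 * (n:ℝ)^2 / (d j:ℝ)^2 := by
      intro i hi
      simp only [Finset.mem_Ioc] at hi
      rw [hfstar j hj.1 hj.2 i hi.1 hi.2,
        show (if j = 1 ∨ j = s+1 then (1:ℝ) else 2) = W j from rfl]
      have h1 : ((-1:ℝ)^j)^2 = 1 := by
        rw [← pow_mul, mul_comm, pow_mul]; norm_num
      have : ((-1:ℝ)^j * W j * ↑n / ↑(d j))^2
          = ((-1:ℝ)^j)^2 * ((W j)^2 * (n:ℝ)^2 / (d j:ℝ)^2) := by ring
      rw [this, h1, one_mul]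
    rw [Finset.sum_congr rfl hval, Finset.sum_const, hcard, nsmul_eq_mul]
    field_simp
  -- the attainment witness
  set c0 : ℝ := 1 / ((n:ℝ) * K) with hc0def
  have hc0pos : 0 < c0 := by
    rw [hc0def]; positivity
  have hc0ne : c0 ≠ 0 := ne_of_gt hc0pos
  have hcon0 : ∑ j ∈ Finset.Icc 1 s, |c0 * βstar (t j)|
      - ∑ i ∈ Finset.Icc 2 n \ (Finset.Icc 1 s).image t, |c0 * βstar i| = 1 := by
    have e1 : ∑ j ∈ Finset.Icc 1 s, |c0 * βstar (t j)|
        = c0 * ∑ j ∈ Finset.Icc 1 s, |βstar (t j)| := by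
      rw [Finset.mul_sum]
      exact Finset.sum_congr rfl (fun j _ => by
        rw [abs_mul, abs_of_pos hc0pos])
    have e2 : ∑ i ∈ Finset.Icc 2 n \ (Finset.Icc 1 s).image t, |c0 * βstar i| = 0 := by
      apply Finset.sum_eq_zero
      intro i hi
      rw [hb0 i hi, mul_zero, abs_zero]
    rw [e1, e2, hAstar, hc0def, sub_zero]
    field_simp
  have hval0 : ((s : ℝ) + 1) * (∑ i ∈ Finset.Icc 1 n, (∑ k ∈ Finset.Icc 1 i, c0 * βstar k)^2) / n
      = ((s : ℝ) + 1) / n * (1 / K) := by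
    have e1 : ∀ i ∈ Finset.Icc 1 n, (∑ k ∈ Finset.Icc 1 i, c0 * βstar k)^2
        = c0^2 * (fstar i)^2 := by
      intro i hi
      simp only [Finset.mem_Icc] at hi
      rw [← Finset.mul_sum, hF i hi.1, mul_pow]
    rw [Finset.sum_congr rfl e1, ← Finset.mul_sum, hQstar, hc0def]
    field_simp
  refine ⟨⟨⟨fun i => c0 * βstar i, hcon0, hval0.symm⟩, ?_⟩, c0, hc0ne, hcon0, hval0⟩
  rintro v ⟨β, hcon, rfl⟩
  set f : ℕ → ℝ := fun i => ∑ k ∈ Finset.Icc 1 i, β k with hfdef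
  set Q : ℝ := ∑ i ∈ Finset.Icc 1 n, (f i)^2 with hQdef
  -- choose block minimizers
  have hpex : ∀ j : ℕ, ∃ pj : ℕ, 1 ≤ j → j ≤ s+1 →
      T (j-1) < pj ∧ pj ≤ T j ∧
        (d j : ℝ) * |f pj| ≤ ∑ i ∈ Finset.Ioc (T (j-1)) (T j), |f i| := by
    intro j
    by_cases hj : 1 ≤ j ∧ j ≤ s+1
    · have hne : (Finset.Ioc (T (j-1)) (T j)).Nonempty := by
        rw [← Finset.card_pos, Nat.card_Ioc]
        have := hTlt j hj.1 hj.2; omega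
      obtain ⟨q, hqmem, hqmin⟩ := Finset.exists_min_image _ (fun i => |f i|) hne
      have hqm := hqmem
      simp only [Finset.mem_Ioc] at hqm
      refine ⟨q, fun _ _ => ⟨hqm.1, hqm.2, ?_⟩⟩
      have hcard : (Finset.Ioc (T (j-1)) (T j)).card = d j := by
        rw [Nat.card_Ioc]
        have h3 := hTstep (j-1)
        have h4 : j - 1 + 1 = j := by omega
        rw [h4] at h3
        omega
      calc (d j : ℝ) * |f q| = ∑ _i ∈ Finset.Ioc (T (j-1)) (T j), |f q| := by
            rw [Finset.sum_const, hcard, nsmul_eq_mul]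
        _ ≤ _ := Finset.sum_le_sum (fun i hi => hqmin i hi)
    · exact ⟨0, fun h1 h2 => absurd ⟨h1, h2⟩ hj⟩
  choose p hp using hpex
  have hpm : ∀ j, 1 ≤ j → j ≤ s → p j ≤ p (j+1) := by
    intro j h1 h2
    have ha := hp j h1 (by omega)
    have hb := hp (j+1) (by omega) (by omega)
    rw [hred j] at hb
    omega
  have hfd : ∀ i : ℕ, f (i+1) - f i = β (i+1) := by
    intro i
    simp only [hfdef]
    rw [Finset.sum_Icc_succ_top (by omega : 1 ≤ i+1)]
    ring
  -- key jump bound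
  have hjump : ∀ j, 1 ≤ j → j ≤ s →
      |β (t j)| ≤ |f (p (j+1)) - f (p j)|
        + (∑ i ∈ Finset.Ioc (p j) (p (j+1)), |β i| - |β (t j)|) := by
    intro j h1 h2
    have htj := htT j h1 h2
    have ha := hp j h1 (by omega)
    have hb := hp (j+1) (by omega) (by omega)
    rw [hred j] at hb
    have a2 : |f (p (j+1)) - f (T j + 1)| ≤ ∑ i ∈ Finset.Ioc (T j + 1) (p (j+1)), |β i| :=
      my_tele β (T j + 1) (p (j+1)) (by omega)
    have a3 : |f (T j) - f (p j)| ≤ ∑ i ∈ Finset.Ioc (p j) (T j), |β i| :=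
      my_tele β (p j) (T j) (by omega)
    have a4 : ∑ i ∈ Finset.Ioc (p j) (p (j+1)), |β i|
        = ∑ i ∈ Finset.Ioc (p j) (T j), |β i| + |β (T j + 1)|
          + ∑ i ∈ Finset.Ioc (T j + 1) (p (j+1)), |β i| := by
      rw [← Finset.sum_Ioc_consecutive (fun i => |β i|) (by omega : p j ≤ T j + 1) (by omega : T j + 1 ≤ p (j+1))]
      rw [← Finset.sum_Ioc_consecutive (fun i => |β i|) (by omega : p j ≤ T j) (by omega : T j ≤ T j + 1)]
      congr 1
      congr 1
      rw [show Finset.Ioc (T j) (T j + 1) = {T j + 1} from by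
        ext x; simp only [Finset.mem_Ioc, Finset.mem_singleton]; omega]
      simp
    have a5 : β (T j + 1) = (f (p (j+1)) - f (p j)) - (f (p (j+1)) - f (T j + 1))
        - (f (T j) - f (p j)) := by
      rw [← hfd (T j)]; ring
    have a6 : |β (T j + 1)| ≤ |f (p (j+1)) - f (p j)| + |f (p (j+1)) - f (T j + 1)|
        + |f (T j) - f (p j)| := by
      rw [a5]
      calc |f (p (j+1)) - f (p j) - (f (p (j+1)) - f (T j + 1)) - (f (T j) - f (p j))|
          ≤ |f (p (j+1)) - f (p j) - (f (p (j+1)) - f (T j + 1))| + |f (T j) - f (p j)| :=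
            abs_sub _ _
        _ ≤ |f (p (j+1)) - f (p j)| + |f (p (j+1)) - f (T j + 1)| + |f (T j) - f (p j)| := by
            have := abs_sub (f (p (j+1)) - f (p j)) (f (p (j+1)) - f (T j + 1))
            linarith
    rw [htj, a4]
    linarith
  -- sum the jump bounds
  have hAsum : ∑ j ∈ Finset.Icc 1 s, |β (t j)|
      ≤ ∑ j ∈ Finset.Icc 1 s, |f (p (j+1)) - f (p j)|
        + (∑ i ∈ Finset.Ioc (p 1) (p (s+1)), |β i| - ∑ j ∈ Finset.Icc 1 s, |β (t j)|) := by
    have h1 : ∑ j ∈ Finset.Icc 1 s, |β (t j)|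
        ≤ ∑ j ∈ Finset.Icc 1 s, (|f (p (j+1)) - f (p j)|
          + (∑ i ∈ Finset.Ioc (p j) (p (j+1)), |β i| - |β (t j)|)) := by
      apply Finset.sum_le_sum
      intro j hj
      simp only [Finset.mem_Icc] at hj
      exact hjump j hj.1 hj.2
    rw [Finset.sum_add_distrib, Finset.sum_sub_distrib,
      my_consec p (fun i => |β i|) s hpm] at h1
    linarith
  have hBeq : ∑ i ∈ Finset.Icc 2 n \ (Finset.Icc 1 s).image t, |β i|
      = ∑ i ∈ Finset.Icc 2 n, |β i| - ∑ j ∈ Finset.Icc 1 s, |β (t j)| := hOffsum _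
  have hsub : ∑ i ∈ Finset.Ioc (p 1) (p (s+1)), |β i| ≤ ∑ i ∈ Finset.Icc 2 n, |β i| := by
    apply Finset.sum_le_sum_of_subset_of_nonneg
    · intro x hx
      simp only [Finset.mem_Ioc] at hx
      have ha := hp 1 le_rfl (by omega)
      have hb := hp (s+1) (by omega) le_rfl
      rw [hT0] at ha
      simp only [Finset.mem_Icc]
      constructor
      · omega
      · have := hTn; omega
    · intro i _ _; exact abs_nonneg _
  have hC : 1 ≤ ∑ j ∈ Finset.Icc 1 s, |f (p (j+1)) - f (p j)| := by
    have := hcon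
    rw [hBeq] at this
    linarith
  -- bound by weighted block sums
  set R : ℝ := ∑ j ∈ Finset.Icc 1 (s+1),
    (W j / (d j : ℝ)) * ∑ i ∈ Finset.Ioc (T (j-1)) (T j), |f i| with hRdef
  have hgle : ∀ j, 1 ≤ j → j ≤ s+1 →
      |f (p j)| ≤ (1 / (d j : ℝ)) * ∑ i ∈ Finset.Ioc (T (j-1)) (T j), |f i| := by
    intro j h1 h2
    have ha := (hp j h1 h2).2.2
    have hd' := hdcast j h1 h2
    rw [div_mul_eq_mul_div, one_mul, le_div_iff₀ hd']
    linarith [ha]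
  have hR1 : 1 ≤ R := by
    have h2 : ∑ j ∈ Finset.Icc 1 s, |f (p (j+1)) - f (p j)|
        ≤ ∑ j ∈ Finset.Icc 1 s, (|f (p j)| + |f (p (j+1))|) := by
      apply Finset.sum_le_sum
      intro j _
      have := abs_sub (f (p (j+1))) (f (p j))
      linarith
    rw [my_pairsum (fun j => |f (p j)|) s hs] at h2
    have h3 : R = (W 1 / (d 1:ℝ)) * ∑ i ∈ Finset.Ioc (T 0) (T 1), |f i|
        + (W (s+1) / (d (s+1):ℝ)) * ∑ i ∈ Finset.Ioc (T s) (T (s+1)), |f i|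
        + ∑ j ∈ Finset.Icc 2 s, (W j / (d j : ℝ)) * ∑ i ∈ Finset.Ioc (T (j-1)) (T j), |f i| := by
      rw [hRdef, hsumsplit]
      norm_num
    have h4 : |f (p 1)| ≤ (W 1 / (d 1:ℝ)) * ∑ i ∈ Finset.Ioc (T 0) (T 1), |f i| := by
      have := hgle 1 le_rfl (by omega)
      rw [hW1]
      simpa using this
    have h5 : |f (p (s+1))| ≤ (W (s+1) / (d (s+1):ℝ)) * ∑ i ∈ Finset.Ioc (T s) (T (s+1)), |f i| := by
      have := hgle (s+1) (by omega) le_rfl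
      rw [hred s] at this
      rw [hWs]
      simpa using this
    have h6 : 2 * ∑ j ∈ Finset.Icc 2 s, |f (p j)|
        ≤ ∑ j ∈ Finset.Icc 2 s, (W j / (d j : ℝ)) * ∑ i ∈ Finset.Ioc (T (j-1)) (T j), |f i| := by
      rw [Finset.mul_sum]
      apply Finset.sum_le_sum
      intro j hj
      simp only [Finset.mem_Icc] at hj
      have := hgle j (by omega) (by omega)
      rw [hWmid j hj.1 hj.2]
      have hd' := hdcast j (by omega) (by omega)
      have hS : (0:ℝ) ≤ ∑ i ∈ Finset.Ioc (T (j-1)) (T j), |f i| :=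
        Finset.sum_nonneg (fun i _ => abs_nonneg _)
      calc 2 * |f (p j)| ≤ 2 * ((1 / (d j : ℝ)) * ∑ i ∈ Finset.Ioc (T (j-1)) (T j), |f i|) := by
            linarith
        _ = (2 / (d j : ℝ)) * ∑ i ∈ Finset.Ioc (T (j-1)) (T j), |f i| := by ring
    rw [h3]
    linarith
  -- the weight function on coordinates
  set cw : ℕ → ℝ := fun i => ∑ j ∈ Finset.Icc 1 (s+1),
    if T (j-1) < i ∧ i ≤ T j then W j / (d j : ℝ) else 0 with hcwdef
  have hcval : ∀ j, 1 ≤ j → j ≤ s+1 → ∀ i, T (j-1) < i → i ≤ T j → cw i = W j / (d j : ℝ) := by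
    intro j h1 h2 i hi1 hi2
    show (∑ j' ∈ Finset.Icc 1 (s+1), if T (j'-1) < i ∧ i ≤ T j' then W j' / (d j' : ℝ) else 0)
      = W j / (d j : ℝ)
    rw [Finset.sum_eq_single_of_mem j (by simp only [Finset.mem_Icc]; omega)]
    · rw [if_pos ⟨hi1, hi2⟩]
    · intro b hb hbj
      simp only [Finset.mem_Icc] at hb
      rw [if_neg]
      rintro ⟨c1, c2⟩
      rcases Nat.lt_or_ge b j with h | h
      · have : T b ≤ T (j-1) := hTmono (by omega)
        omega
      · have : T j ≤ T (b-1) := hTmono (by omega)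
        omega
  have hIccIoc2 : Finset.Icc 1 n = Finset.Ioc (T 0) (T (s+1)) := by
    rw [hT0, hTn]; rfl
  have hcsum : ∑ i ∈ Finset.Icc 1 n, cw i * |f i| = R := by
    rw [hIccIoc2, ← my_consec' T (fun i => cw i * |f i|) (s+1)
      (fun j h1 h2 => (hTlt j h1 h2).le), hRdef]
    apply Finset.sum_congr rfl
    intro j hj
    simp only [Finset.mem_Icc] at hj
    rw [Finset.mul_sum]
    apply Finset.sum_congr rfl
    intro i hi
    simp only [Finset.mem_Ioc] at hi
    rw [hcval j hj.1 hj.2 i hi.1 hi.2]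
  have hcsq : ∑ i ∈ Finset.Icc 1 n, (cw i)^2 = K := by
    rw [hIccIoc2, ← my_consec' T (fun i => (cw i)^2) (s+1)
      (fun j h1 h2 => (hTlt j h1 h2).le), ← hKW]
    apply Finset.sum_congr rfl
    intro j hj
    simp only [Finset.mem_Icc] at hj
    have hcard : (Finset.Ioc (T (j-1)) (T j)).card = d j := by
      rw [Nat.card_Ioc]
      have h3 := hTstep (j-1)
      have h4 : j - 1 + 1 = j := by omega
      rw [h4] at h3
      omega
    have hval : ∀ i ∈ Finset.Ioc (T (j-1)) (T j), (cw i)^2 = (W j / (d j:ℝ))^2 := by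
      intro i hi
      simp only [Finset.mem_Ioc] at hi
      rw [hcval j hj.1 hj.2 i hi.1 hi.2]
    rw [Finset.sum_congr rfl hval, Finset.sum_const, hcard, nsmul_eq_mul]
    have hd' := hdcast j hj.1 hj.2
    field_simp
  -- Cauchy-Schwarz
  have hCS : (∑ i ∈ Finset.Icc 1 n, cw i * |f i|)^2
      ≤ (∑ i ∈ Finset.Icc 1 n, (cw i)^2) * ∑ i ∈ Finset.Icc 1 n, |f i|^2 :=
    Finset.sum_mul_sq_le_sq_mul_sq _ _ _
  have habs2 : ∑ i ∈ Finset.Icc 1 n, |f i|^2 = Q := by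
    rw [hQdef]
    exact Finset.sum_congr rfl (fun i _ => sq_abs _)
  have hQK : 1 ≤ K * Q := by
    rw [hcsum, hcsq, habs2] at hCS
    nlinarith [hR1]
  have hQb : 1 / K ≤ Q := by
    rw [div_le_iff₀ hKpos]
    linarith [mul_comm K Q]
  -- conclude
  have h := mul_le_mul_of_nonneg_left hQb (show (0:ℝ) ≤ (s:ℝ)+1 by positivity)
  calc ((s:ℝ) + 1) / n * (1 / K) = ((s:ℝ)+1) * (1/K) / n := by ring
    _ ≤ ((s:ℝ) + 1) * Q / n := by gcongr
end

section
/- Let w ∈ ℝ^n with w_i = 1 for i ∈ {1} ∪ S and 0 ≤ w_i ≤ 1 otherwise, and let D be the incidence matrix of the path graph. Define the weighted compatibility constant κ_w²(S) = min{(s+1)‖Xβ‖₂²/n : ‖(w⊙β)_S‖₁ - ‖(w⊙β)_{-({1}∪S)}‖₁ = 1}. Then, under the block-length assumptions of the unweighted bound, κ_w²(S) ≥ ((s+1)/n)·1/(‖w‖_∞ √K + ‖Dw‖₂)² ≥ ((s+1)/n)·1/(2(‖w‖_∞² K + ‖Dw‖₂²)), where K is the constant from the unweighted lower bound. -/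
open Finset

lemma aux_sqrt2 (x y : ℝ) (hx : 0 ≤ x) (hy : 0 ≤ y) :
    Real.sqrt x * Real.sqrt y * 2 ≤ x + y := by
  nlinarith [sq_nonneg (Real.sqrt x - Real.sqrt y), Real.sq_sqrt hx, Real.sq_sqrt hy,
    Real.sqrt_nonneg x, Real.sqrt_nonneg y]

lemma aux_icc_split (f : ℕ → ℝ) {a m b : ℕ} (ha : 1 ≤ a) (h1 : a ≤ m + 1) (h2 : m ≤ b) :
    ∑ i ∈ Icc a b, f i = ∑ i ∈ Icc a m, f i + ∑ i ∈ Icc (m+1) b, f i := by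
  have e1 : Icc a b = Ioc (a-1) b := by rw [← Finset.Icc_add_one_left_eq_Ioc]; congr 1; omega
  have e2 : Icc a m = Ioc (a-1) m := by rw [← Finset.Icc_add_one_left_eq_Ioc]; congr 1; omega
  have e3 : Icc (m+1) b = Ioc m b := by rw [Finset.Icc_add_one_left_eq_Ioc]
  rw [e1, e2, e3, Finset.sum_Ioc_consecutive f (by omega : a-1 ≤ m) h2]

lemma aux_sum3 (f : ℕ → ℝ) (hf : ∀ i, 0 ≤ f i) {A B C D : Finset ℕ}
    (hA : A ⊆ D) (hB : B ⊆ D) (hC : C ⊆ D)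
    (hAB : Disjoint A B) (hAC : Disjoint A C) (hBC : Disjoint B C) :
    ∑ i ∈ A, f i + ∑ i ∈ B, f i + ∑ i ∈ C, f i ≤ ∑ i ∈ D, f i := by
  rw [← Finset.sum_union hAB, ← Finset.sum_union (Finset.disjoint_union_left.mpr ⟨hAC, hBC⟩)]
  exact Finset.sum_le_sum_of_subset_of_nonneg
    (Finset.union_subset (Finset.union_subset hA hB) hC) (fun i _ _ => hf i)

lemma aux_chain_up (c : ℕ → ℝ) (m q : ℕ) (h : m ≤ q) :
    |c q| ≤ |c m| + ∑ k ∈ Icc (m+1) q, |c k - c (k-1)| := by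
  induction q, h using Nat.le_induction with
  | base => simp
  | succ q hq ih =>
    rw [Finset.sum_Icc_succ_top (by omega : m+1 ≤ q+1)]
    have h1 := abs_sub_abs_le_abs_sub (c (q+1)) (c q)
    simp only [Nat.add_sub_cancel]
    linarith

lemma aux_chain_down (c : ℕ → ℝ) (p m : ℕ) (h : p ≤ m) :
    |c p| ≤ |c m| + ∑ k ∈ Icc (p+1) m, |c k - c (k-1)| := by
  induction m, h using Nat.le_induction with
  | base => simp
  | succ m hm ih =>
    rw [Finset.sum_Icc_succ_top (by omega : p+1 ≤ m+1)]
    have h1 := abs_sub_abs_le_abs_sub (c m) (c (m+1))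
    rw [abs_sub_comm] at h1
    simp only [Nat.add_sub_cancel]
    linarith

lemma aux_min_sqrt (c : ℕ → ℝ) (p q : ℕ) (hpq : p ≤ q) :
    ∃ m, p ≤ m ∧ m ≤ q ∧
      |c m| ≤ Real.sqrt (∑ i ∈ Icc p q, (c i)^2) / Real.sqrt ((Icc p q).card) := by
  obtain ⟨m, hm, hmin⟩ := Finset.exists_min_image (Icc p q) (fun i => |c i|)
    ⟨p, by simp [hpq]⟩
  rw [Finset.mem_Icc] at hm
  refine ⟨m, hm.1, hm.2, ?_⟩
  have hcard : 0 < ((Icc p q).card : ℝ) := by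
    have : 0 < (Icc p q).card := Finset.card_pos.mpr ⟨p, by simp [hpq]⟩
    exact_mod_cast this
  have h1 : ((Icc p q).card : ℝ) * (c m)^2 ≤ ∑ i ∈ Icc p q, (c i)^2 := by
    rw [← nsmul_eq_mul, ← Finset.sum_const]
    apply Finset.sum_le_sum
    intro i hi
    have := hmin i hi
    calc (c m)^2 = |c m|^2 := (sq_abs _).symm
    _ ≤ |c i|^2 := by nlinarith [abs_nonneg (c m)]
    _ = (c i)^2 := sq_abs _
  have h2 : (c m)^2 ≤ (∑ i ∈ Icc p q, (c i)^2) / ((Icc p q).card : ℝ) :=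
    (le_div_iff₀ hcard).mpr (by linarith)
  calc |c m| = Real.sqrt ((c m)^2) := (Real.sqrt_sq_eq_abs _).symm
  _ ≤ Real.sqrt ((∑ i ∈ Icc p q, (c i)^2) / ((Icc p q).card : ℝ)) := Real.sqrt_le_sqrt h2
  _ = _ := Real.sqrt_div (by positivity) _

lemma aux_blk_top (c : ℕ → ℝ) (p q : ℕ) (hpq : p ≤ q) :
    |c q| ≤ Real.sqrt (∑ i ∈ Icc p q, (c i)^2) / Real.sqrt ((Icc p q).card) +
      ∑ k ∈ Icc (p+1) q, |c k - c (k-1)| := by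
  obtain ⟨m, hm1, hm2, hm3⟩ := aux_min_sqrt c p q hpq
  have h1 := aux_chain_up c m q hm2
  have h2 : ∑ k ∈ Icc (m+1) q, |c k - c (k-1)| ≤ ∑ k ∈ Icc (p+1) q, |c k - c (k-1)| :=
    Finset.sum_le_sum_of_subset_of_nonneg (Finset.Icc_subset_Icc (by omega) le_rfl)
      (fun i _ _ => abs_nonneg _)
  linarith

lemma aux_blk_bot (c : ℕ → ℝ) (p q : ℕ) (hpq : p ≤ q) :
    |c p| ≤ Real.sqrt (∑ i ∈ Icc p q, (c i)^2) / Real.sqrt ((Icc p q).card) +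
      ∑ k ∈ Icc (p+1) q, |c k - c (k-1)| := by
  obtain ⟨m, hm1, hm2, hm3⟩ := aux_min_sqrt c p q hpq
  have h1 := aux_chain_down c p m hm1
  have h2 : ∑ k ∈ Icc (p+1) m, |c k - c (k-1)| ≤ ∑ k ∈ Icc (p+1) q, |c k - c (k-1)| :=
    Finset.sum_le_sum_of_subset_of_nonneg (Finset.Icc_subset_Icc le_rfl hm2)
      (fun i _ _ => abs_nonneg _)
  linarith

lemma aux_amgm (S msz lam : ℝ) (hS : 0 ≤ S) (hm : 0 < msz) (hl : 0 < lam) :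
    Real.sqrt S / Real.sqrt msz ≤ S/(2*lam) + lam/2 * (1/msz) := by
  have e1 : Real.sqrt S / Real.sqrt msz = Real.sqrt (S/lam) * Real.sqrt (lam/msz) := by
    rw [← Real.sqrt_mul (by positivity), ← Real.sqrt_div hS]
    congr 1
    field_simp
  have h2 := aux_sqrt2 (S/lam) (lam/msz) (by positivity) (by positivity)
  rw [e1]
  have e3 : S/lam/2 = S/(2*lam) := by ring
  have e4 : lam/msz/2 = lam/2 * (1/msz) := by ring
  linarith

lemma aux_opt (Q K : ℝ) (hQ : 0 < Q) (hK0 : 0 < K) :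
    Q/(2*Real.sqrt (Q/K)) + Real.sqrt (Q/K)/2*K = Real.sqrt K * Real.sqrt Q := by
  have ha : 0 < Real.sqrt Q := Real.sqrt_pos.mpr hQ
  have hb : 0 < Real.sqrt K := Real.sqrt_pos.mpr hK0
  have hQs : Real.sqrt Q * Real.sqrt Q = Q := Real.mul_self_sqrt hQ.le
  have hKs : Real.sqrt K * Real.sqrt K = K := Real.mul_self_sqrt hK0.le
  rw [Real.sqrt_div hQ.le]
  field_simp
  linear_combination (-Real.sqrt K*Real.sqrt K)*hQs + (-Real.sqrt Q*Real.sqrt Q)*hKs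

set_option maxHeartbeats 1000000 in
lemma aux_core (n s : ℕ) (hn : 1 ≤ n) (hs : 1 ≤ s)
    (t : ℕ → ℕ)
    (ht : ∀ j, 2 ≤ j → j ≤ s → t (j-1) < t j)
    (htmem : ∀ j, 1 ≤ j → j ≤ s → 2 ≤ t j ∧ t j ≤ n)
    (d u : ℕ → ℕ)
    (hd1 : d 1 = t 1 - 1)
    (hdj : ∀ j, 2 ≤ j → j ≤ s → d j = t j - t (j-1))
    (hds : d (s+1) = n - t s + 1)
    (hd1b : 2 ≤ d 1) (hdsb : 2 ≤ d (s+1))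
    (hdjb : ∀ j, 2 ≤ j → j ≤ s → 4 ≤ d j)
    (hu : ∀ j, 2 ≤ j → j ≤ s → 2 ≤ u j ∧ u j ≤ d j - 2)
    (K : ℝ)
    (hK : K = 1 / (d 1 : ℝ)
        + (∑ j ∈ Finset.Icc 2 s, (1 / (u j : ℝ) + 1 / ((d j : ℝ) - (u j : ℝ))))
        + 1 / (d (s+1) : ℝ))
    (hK0 : 0 < K)
    (c : ℕ → ℝ) :
    ∑ j ∈ Icc 1 s, |c (t j) - c (t j - 1)|
      - ∑ i ∈ Icc 2 n \ (Icc 1 s).image t, |c i - c (i-1)|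
      ≤ Real.sqrt K * Real.sqrt (∑ i ∈ Icc 1 n, (c i)^2) := by
  set T : Finset ℕ := (Icc 1 s).image t with hT
  have tmono : ∀ j, 1 ≤ j → ∀ k, j < k → k ≤ s → t j < t k := by
    intro j hj k
    induction k with
    | zero => intro h _; omega
    | succ k ih =>
      intro hjk hk
      have hlt := ht (k+1) (by omega) hk
      rw [Nat.add_sub_cancel] at hlt
      rcases Nat.lt_or_ge j k with h | h
      · exact lt_trans (ih h (by omega)) hlt
      · have hjk' : j = k := by omega
        rw [hjk']; exact hlt
  have tle : ∀ j k, 1 ≤ j → j ≤ k → k ≤ s → t j ≤ t k := by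
    intro j k h1 h2 h3
    rcases eq_or_lt_of_le h2 with h | h
    · rw [h]
    · exact (tmono j h1 k h h3).le
  have notT : ∀ i, (∀ j, 1 ≤ j → j ≤ s → t j ≠ i) → i ∉ T := by
    intro i h hi
    rw [hT, Finset.mem_image] at hi
    obtain ⟨j, hj, h3⟩ := hi
    rw [Finset.mem_Icc] at hj
    exact h j hj.1 hj.2 h3
  have hfacts : ∀ m, 1 ≤ m → m+1 ≤ s →
      2 ≤ t m ∧ t m ≤ n ∧ t (m+1) ≤ n ∧ t m < t (m+1) ∧ 2 ≤ u (m+1) ∧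
      u (m+1) + 2 ≤ d (m+1) ∧ d (m+1) = t (m+1) - t m := by
    intro m hm hms1
    obtain ⟨a1, a2⟩ := htmem m hm (by omega)
    obtain ⟨b1, b2⟩ := htmem (m+1) (by omega) hms1
    have hdm := hdj (m+1) (by omega) hms1
    rw [Nat.add_sub_cancel] at hdm
    have hdmb := hdjb (m+1) (by omega) hms1
    obtain ⟨c1, c2⟩ := hu (m+1) (by omega) hms1
    have htlt := ht (m+1) (by omega) hms1
    rw [Nat.add_sub_cancel] at htlt
    exact ⟨a1, a2, b2, htlt, c1, by omega, hdm⟩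
  obtain ⟨ht12, ht1n⟩ := htmem 1 le_rfl hs
  obtain ⟨hts2, htsn⟩ := htmem s hs le_rfl
  have key : ∀ m, 1 ≤ m → m ≤ s →
      ∑ j ∈ Icc 1 m, |c (t j) - c (t j - 1)| ≤
        (∑ i ∈ Icc 2 (t m - 1) \ T, |c i - c (i-1)|)
        + (Real.sqrt (∑ i ∈ Icc 1 (t 1 - 1), (c i)^2) / Real.sqrt ((d 1 : ℝ))
           + ∑ g ∈ Icc 2 m,
               (Real.sqrt (∑ i ∈ Icc (t (g-1)) (t (g-1) + u g - 1), (c i)^2)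
                   / Real.sqrt ((u g : ℝ))
                + Real.sqrt (∑ i ∈ Icc (t (g-1) + u g) (t g - 1), (c i)^2)
                    / Real.sqrt ((d g : ℝ) - (u g : ℝ))))
        + |c (t m)| := by
    intro m hm1
    induction m, hm1 using Nat.le_induction with
    | base =>
      intro hms
      have htri : |c (t 1) - c (t 1 - 1)| ≤ |c (t 1)| + |c (t 1 - 1)| := abs_sub _ _
      have hblk := aux_blk_top c 1 (t 1 - 1) (by omega)
      have hcard : (((Icc 1 (t 1 - 1)).card : ℕ) : ℝ) = ((d 1 : ℕ) : ℝ) := by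
        rw [Nat.card_Icc]; norm_cast; omega
      rw [hcard] at hblk
      norm_num at hblk
      have hset : Icc 2 (t 1 - 1) \ T = Icc 2 (t 1 - 1) := by
        apply Finset.sdiff_eq_self_iff_disjoint.mpr
        rw [Finset.disjoint_left]
        intro i hi hiT
        rw [Finset.mem_Icc] at hi
        rw [hT, Finset.mem_image] at hiT
        obtain ⟨j, hj, h3⟩ := hiT
        rw [Finset.mem_Icc] at hj
        have := tle 1 j le_rfl hj.1 hj.2
        omega
      rw [Finset.Icc_self, Finset.sum_singleton, hset,
        show Icc 2 1 = (∅ : Finset ℕ) from Finset.Icc_eq_empty (by omega),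
        Finset.sum_empty]
      linarith
    | succ m hm ih =>
      intro hms1
      have ihm := ih (by omega)
      obtain ⟨f1, f2, f3, f4, f5, f6, f7⟩ := hfacts m hm hms1
      rw [Finset.sum_Icc_succ_top (show 1 ≤ m+1 by omega),
        Finset.sum_Icc_succ_top (show 2 ≤ m+1 by omega)]
      simp only [Nat.add_sub_cancel]
      have htri : |c (t (m+1)) - c (t (m+1) - 1)| ≤ |c (t (m+1))| + |c (t (m+1) - 1)| :=
        abs_sub _ _
      have hR := aux_blk_bot c (t m) (t m + u (m+1) - 1) (by omega)
      have hL := aux_blk_top c (t m + u (m+1)) (t (m+1) - 1) (by omega)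
      have hcardR : (((Icc (t m) (t m + u (m+1) - 1)).card : ℕ) : ℝ) = ((u (m+1) : ℕ) : ℝ) := by
        rw [Nat.card_Icc]; norm_cast; omega
      have hcardL : (((Icc (t m + u (m+1)) (t (m+1) - 1)).card : ℕ) : ℝ)
          = ((d (m+1) : ℝ) - (u (m+1) : ℝ)) := by
        rw [Nat.card_Icc]
        rw [show t (m+1) - 1 + 1 - (t m + u (m+1)) = d (m+1) - u (m+1) by omega,
          Nat.cast_sub (by omega)]
      rw [hcardR] at hR
      rw [hcardL] at hL
      have hgap : ∀ i, t m < i → i < t (m+1) → i ∉ T := by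
        intro i h1 h2
        apply notT
        intro j hj1 hj2 hje
        rcases le_or_gt j m with h | h
        · have := tle j m hj1 h (by omega); omega
        · have := tle (m+1) j (by omega) h hj2; omega
      have hA : Icc 2 (t m - 1) \ T ⊆ Icc 2 (t (m+1) - 1) \ T :=
        Finset.sdiff_subset_sdiff (Finset.Icc_subset_Icc le_rfl (by omega)) le_rfl
      have hB : Icc (t m + 1) (t m + u (m+1) - 1) ⊆ Icc 2 (t (m+1) - 1) \ T := by
        intro i hi
        rw [Finset.mem_Icc] at hi
        rw [Finset.mem_sdiff, Finset.mem_Icc]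
        exact ⟨⟨by omega, by omega⟩, hgap i (by omega) (by omega)⟩
      have hC : Icc (t m + u (m+1) + 1) (t (m+1) - 1) ⊆ Icc 2 (t (m+1) - 1) \ T := by
        intro i hi
        rw [Finset.mem_Icc] at hi
        rw [Finset.mem_sdiff, Finset.mem_Icc]
        exact ⟨⟨by omega, by omega⟩, hgap i (by omega) (by omega)⟩
      have hAB : Disjoint (Icc 2 (t m - 1) \ T) (Icc (t m + 1) (t m + u (m+1) - 1)) := by
        rw [Finset.disjoint_left]
        intro i hi hi2
        rw [Finset.mem_sdiff, Finset.mem_Icc] at hi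
        rw [Finset.mem_Icc] at hi2
        omega
      have hAC : Disjoint (Icc 2 (t m - 1) \ T) (Icc (t m + u (m+1) + 1) (t (m+1) - 1)) := by
        rw [Finset.disjoint_left]
        intro i hi hi2
        rw [Finset.mem_sdiff, Finset.mem_Icc] at hi
        rw [Finset.mem_Icc] at hi2
        omega
      have hBC : Disjoint (Icc (t m + 1) (t m + u (m+1) - 1))
          (Icc (t m + u (m+1) + 1) (t (m+1) - 1)) := by
        rw [Finset.disjoint_left]
        intro i hi hi2
        rw [Finset.mem_Icc] at hi
        rw [Finset.mem_Icc] at hi2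
        omega
      have hsum3 := aux_sum3 (fun i => |c i - c (i-1)|) (fun i => abs_nonneg _)
        hA hB hC hAB hAC hBC
      linarith
  -- second induction: block masses add up to the full sum of squares
  have key2 : ∀ m, 1 ≤ m → m ≤ s →
      (∑ i ∈ Icc 1 (t 1 - 1), (c i)^2)
      + ∑ g ∈ Icc 2 m, ((∑ i ∈ Icc (t (g-1)) (t (g-1) + u g - 1), (c i)^2)
          + ∑ i ∈ Icc (t (g-1) + u g) (t g - 1), (c i)^2)
      = ∑ i ∈ Icc 1 (t m - 1), (c i)^2 := by
    intro m hm1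
    induction m, hm1 using Nat.le_induction with
    | base =>
      intro _
      rw [show Icc 2 1 = (∅ : Finset ℕ) from Finset.Icc_eq_empty (by omega),
        Finset.sum_empty, add_zero]
    | succ m hm ih =>
      intro hms1
      obtain ⟨f1, f2, f3, f4, f5, f6, f7⟩ := hfacts m hm hms1
      rw [Finset.sum_Icc_succ_top (show 2 ≤ m+1 by omega)]
      simp only [Nat.add_sub_cancel]
      have hsplit1 : ∑ i ∈ Icc (t m) (t (m+1) - 1), (c i)^2
          = (∑ i ∈ Icc (t m) (t m + u (m+1) - 1), (c i)^2)
            + ∑ i ∈ Icc (t m + u (m+1)) (t (m+1) - 1), (c i)^2 := by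
        have h := aux_icc_split (fun i => (c i)^2) (a := t m) (m := t m + u (m+1) - 1)
          (b := t (m+1) - 1) (by omega) (by omega) (by omega)
        rw [show t m + u (m+1) - 1 + 1 = t m + u (m+1) by omega] at h
        exact h
      have hsplit2 : ∑ i ∈ Icc 1 (t (m+1) - 1), (c i)^2
          = (∑ i ∈ Icc 1 (t m - 1), (c i)^2) + ∑ i ∈ Icc (t m) (t (m+1) - 1), (c i)^2 := by
        have h := aux_icc_split (fun i => (c i)^2) (a := 1) (m := t m - 1)
          (b := t (m+1) - 1) (by omega) (by omega) (by omega)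
        rw [show t m - 1 + 1 = t m by omega] at h
        exact h
      have ihm := ih (by omega)
      linarith
  -- last block
  have hRs := aux_blk_bot c (t s) n htsn
  have hcardS : (((Icc (t s) n).card : ℕ) : ℝ) = ((d (s+1) : ℕ) : ℝ) := by
    rw [Nat.card_Icc]; norm_cast; omega
  rw [hcardS] at hRs
  have hgapS : ∀ i, t s < i → i ∉ T := by
    intro i h
    apply notT
    intro j hj1 hj2 hje
    have := tle j s hj1 hj2 le_rfl
    omega
  have hA2 : Icc 2 (t s - 1) \ T ⊆ Icc 2 n \ T :=
    Finset.sdiff_subset_sdiff (Finset.Icc_subset_Icc le_rfl (by omega)) le_rfl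
  have hB2 : Icc (t s + 1) n ⊆ Icc 2 n \ T := by
    intro i hi
    rw [Finset.mem_Icc] at hi
    rw [Finset.mem_sdiff, Finset.mem_Icc]
    exact ⟨⟨by omega, by omega⟩, hgapS i (by omega)⟩
  have hAB2 : Disjoint (Icc 2 (t s - 1) \ T) (Icc (t s + 1) n) := by
    rw [Finset.disjoint_left]
    intro i hi hi2
    rw [Finset.mem_sdiff, Finset.mem_Icc] at hi
    rw [Finset.mem_Icc] at hi2
    omega
  have hpen := aux_sum3 (fun i => |c i - c (i-1)|) (fun i => abs_nonneg _)
    hA2 hB2 (Finset.empty_subset (Icc 2 n \ T)) hAB2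
    (Finset.disjoint_empty_right _) (Finset.disjoint_empty_right _)
  rw [Finset.sum_empty, add_zero] at hpen
  -- total block mass equals Q
  have hStot : (∑ i ∈ Icc 1 (t 1 - 1), (c i)^2)
      + (∑ g ∈ Icc 2 s, ((∑ i ∈ Icc (t (g-1)) (t (g-1) + u g - 1), (c i)^2)
          + ∑ i ∈ Icc (t (g-1) + u g) (t g - 1), (c i)^2))
      + (∑ i ∈ Icc (t s) n, (c i)^2) = ∑ i ∈ Icc 1 n, (c i)^2 := by
    have h1 := key2 s hs le_rfl
    have h2 := aux_icc_split (fun i => (c i)^2) (a := 1) (m := t s - 1) (b := n)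
      (by omega) (by omega) (by omega)
    rw [show t s - 1 + 1 = t s by omega] at h2
    linarith
  -- AM-GM bound on the sum of block minima, for every lam > 0
  have hMtot : ∀ lam : ℝ, 0 < lam →
      Real.sqrt (∑ i ∈ Icc 1 (t 1 - 1), (c i)^2) / Real.sqrt ((d 1 : ℝ))
      + (∑ g ∈ Icc 2 s,
          (Real.sqrt (∑ i ∈ Icc (t (g-1)) (t (g-1) + u g - 1), (c i)^2)
              / Real.sqrt ((u g : ℝ))
           + Real.sqrt (∑ i ∈ Icc (t (g-1) + u g) (t g - 1), (c i)^2)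
               / Real.sqrt ((d g : ℝ) - (u g : ℝ))))
      + Real.sqrt (∑ i ∈ Icc (t s) n, (c i)^2) / Real.sqrt ((d (s+1) : ℝ))
      ≤ (∑ i ∈ Icc 1 n, (c i)^2)/(2*lam) + lam/2 * K := by
    intro lam hl
    have hd1p : (0:ℝ) < (d 1 : ℝ) := by exact_mod_cast (by omega : 0 < d 1)
    have hdsp : (0:ℝ) < (d (s+1) : ℝ) := by exact_mod_cast (by omega : 0 < d (s+1))
    have h1 := aux_amgm (∑ i ∈ Icc 1 (t 1 - 1), (c i)^2) ((d 1 : ℝ)) lam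
      (by positivity) hd1p hl
    have h3 := aux_amgm (∑ i ∈ Icc (t s) n, (c i)^2) ((d (s+1) : ℝ)) lam
      (by positivity) hdsp hl
    have h2 : ∑ g ∈ Icc 2 s,
          (Real.sqrt (∑ i ∈ Icc (t (g-1)) (t (g-1) + u g - 1), (c i)^2)
              / Real.sqrt ((u g : ℝ))
           + Real.sqrt (∑ i ∈ Icc (t (g-1) + u g) (t g - 1), (c i)^2)
               / Real.sqrt ((d g : ℝ) - (u g : ℝ)))
        ≤ ∑ g ∈ Icc 2 s,
          (((∑ i ∈ Icc (t (g-1)) (t (g-1) + u g - 1), (c i)^2)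
              + ∑ i ∈ Icc (t (g-1) + u g) (t g - 1), (c i)^2)/(2*lam)
            + lam/2 * (1/(u g : ℝ) + 1/((d g : ℝ) - (u g : ℝ)))) := by
      apply Finset.sum_le_sum
      intro g hg
      rw [Finset.mem_Icc] at hg
      obtain ⟨g1, g2⟩ := hu g hg.1 hg.2
      have hdb := hdjb g hg.1 hg.2
      have hup : (0:ℝ) < (u g : ℝ) := by exact_mod_cast (by omega : 0 < u g)
      have hdup : (0:ℝ) < (d g : ℝ) - (u g : ℝ) := by
        have : (u g : ℝ) + 2 ≤ (d g : ℝ) := by exact_mod_cast (by omega : u g + 2 ≤ d g)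
        linarith
      have hA := aux_amgm (∑ i ∈ Icc (t (g-1)) (t (g-1) + u g - 1), (c i)^2)
        ((u g : ℝ)) lam (by positivity) hup hl
      have hB := aux_amgm (∑ i ∈ Icc (t (g-1) + u g) (t g - 1), (c i)^2)
        ((d g : ℝ) - (u g : ℝ)) lam (by positivity) hdup hl
      rw [add_div, mul_add]
      linarith
    have h2eq : ∑ g ∈ Icc 2 s,
          (((∑ i ∈ Icc (t (g-1)) (t (g-1) + u g - 1), (c i)^2)
              + ∑ i ∈ Icc (t (g-1) + u g) (t g - 1), (c i)^2)/(2*lam)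
            + lam/2 * (1/(u g : ℝ) + 1/((d g : ℝ) - (u g : ℝ))))
        = (∑ g ∈ Icc 2 s, ((∑ i ∈ Icc (t (g-1)) (t (g-1) + u g - 1), (c i)^2)
              + ∑ i ∈ Icc (t (g-1) + u g) (t g - 1), (c i)^2))/(2*lam)
          + lam/2 * ∑ g ∈ Icc 2 s, (1/(u g : ℝ) + 1/((d g : ℝ) - (u g : ℝ))) := by
      rw [Finset.sum_add_distrib, ← Finset.sum_div, ← Finset.mul_sum]
    rw [h2eq] at h2
    rw [hK, ← hStot, add_div, add_div, mul_add, mul_add]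
    linarith
  -- conclude the minima bound with optimal lam
  have hfin :
      Real.sqrt (∑ i ∈ Icc 1 (t 1 - 1), (c i)^2) / Real.sqrt ((d 1 : ℝ))
      + (∑ g ∈ Icc 2 s,
          (Real.sqrt (∑ i ∈ Icc (t (g-1)) (t (g-1) + u g - 1), (c i)^2)
              / Real.sqrt ((u g : ℝ))
           + Real.sqrt (∑ i ∈ Icc (t (g-1) + u g) (t g - 1), (c i)^2)
               / Real.sqrt ((d g : ℝ) - (u g : ℝ))))
      + Real.sqrt (∑ i ∈ Icc (t s) n, (c i)^2) / Real.sqrt ((d (s+1) : ℝ))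
      ≤ Real.sqrt K * Real.sqrt (∑ i ∈ Icc 1 n, (c i)^2) := by
    rcases eq_or_lt_of_le (show (0:ℝ) ≤ ∑ i ∈ Icc 1 n, (c i)^2 by positivity) with hq | hq
    · have hε : ∀ ε : ℝ, 0 < ε →
          Real.sqrt (∑ i ∈ Icc 1 (t 1 - 1), (c i)^2) / Real.sqrt ((d 1 : ℝ))
          + (∑ g ∈ Icc 2 s,
              (Real.sqrt (∑ i ∈ Icc (t (g-1)) (t (g-1) + u g - 1), (c i)^2)
                  / Real.sqrt ((u g : ℝ))
               + Real.sqrt (∑ i ∈ Icc (t (g-1) + u g) (t g - 1), (c i)^2)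
                   / Real.sqrt ((d g : ℝ) - (u g : ℝ))))
          + Real.sqrt (∑ i ∈ Icc (t s) n, (c i)^2) / Real.sqrt ((d (s+1) : ℝ))
          ≤ 0 + ε := by
        intro ε hε
        have h := hMtot (2*ε/K) (by positivity)
        rw [← hq] at h
        have e1 : (0:ℝ)/(2*(2*ε/K)) = 0 := by simp
        have e2 : (2*ε/K)/2 * K = ε := by field_simp
        rw [e1, e2] at h
        linarith
      have h0 := le_of_forall_pos_le_add hε
      rw [← hq, Real.sqrt_zero, mul_zero]
      linarith
    · have h := hMtot (Real.sqrt ((∑ i ∈ Icc 1 n, (c i)^2)/K))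
        (Real.sqrt_pos.mpr (by positivity))
      rw [aux_opt _ K hq hK0] at h
      exact h
  have keyS := key s hs le_rfl
  linarith


lemma aux_glue (n s : ℕ) (t : ℕ → ℕ) (w β b c : ℕ → ℝ)
    (hbdef : ∀ i, b i = ∑ k ∈ Icc 1 i, β k)
    (hcdef : ∀ i, c i = w i * b i)
    (htmem : ∀ j, 1 ≤ j → j ≤ s → 2 ≤ t j ∧ t j ≤ n)
    (htinj : ∀ a ∈ Icc 1 s, ∀ b' ∈ Icc 1 s, t a = t b' → a = b')
    (Dw2 : ℝ)
    (hDw2 : Dw2 = ∑ i ∈ Finset.Icc 2 n, (w i - w (i-1))^2)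
    (hβ : ∑ j ∈ Finset.Icc 1 s, |w (t j) * β (t j)|
        - ∑ i ∈ Finset.Icc 2 n \ (Finset.Icc 1 s).image t, |w i * β i| = 1) :
    (1:ℝ) ≤ (∑ j ∈ Icc 1 s, |c (t j) - c (t j - 1)|
      - ∑ i ∈ Icc 2 n \ (Icc 1 s).image t, |c i - c (i-1)|)
      + Real.sqrt Dw2 * Real.sqrt (∑ i ∈ Icc 1 n, (b i)^2) := by
  have hbstep : ∀ i : ℕ, 1 ≤ i → b i = b (i-1) + β i := by
    intro i hi
    rw [hbdef i, hbdef (i-1)]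
    obtain ⟨i', rfl⟩ := Nat.exists_eq_add_of_le hi
    rw [show 1 + i' = i' + 1 by omega, Finset.sum_Icc_succ_top (by omega : 1 ≤ i' + 1)]
    simp
  have hident : ∀ i : ℕ, 1 ≤ i →
      w i * β i = (c i - c (i-1)) - (w i - w (i-1)) * b (i-1) := by
    intro i hi
    rw [hcdef i, hcdef (i-1), hbstep i hi]
    ring
  have hE1 : ∀ i : ℕ, 1 ≤ i → |w i * β i| ≤ |c i - c (i-1)| + |w i - w (i-1)| * |b (i-1)| := by
    intro i hi
    rw [hident i hi, ← abs_mul]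
    exact abs_sub _ _
  have hE2 : ∀ i : ℕ, 1 ≤ i → |c i - c (i-1)| ≤ |w i * β i| + |w i - w (i-1)| * |b (i-1)| := by
    intro i hi
    have h : c i - c (i-1) = w i * β i + (w i - w (i-1)) * b (i-1) := by
      rw [hident i hi]; ring
    rw [h, ← abs_mul]
    exact abs_add_le _ _
  have hTsub : (Icc 1 s).image t ⊆ Icc 2 n := by
    intro i hi
    rw [Finset.mem_image] at hi
    obtain ⟨j, hj, rfl⟩ := hi
    rw [Finset.mem_Icc] at hj ⊢
    exact htmem j hj.1 hj.2
  have himg : ∀ f : ℕ → ℝ, ∑ i ∈ (Icc 1 s).image t, f i = ∑ j ∈ Icc 1 s, f (t j) :=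
    fun f => Finset.sum_image (fun a ha b' hb' hab => htinj a ha b' hb' hab)
  have hA : ∑ j ∈ Icc 1 s, |w (t j) * β (t j)|
      ≤ ∑ j ∈ Icc 1 s, (|c (t j) - c (t j - 1)| + |w (t j) - w (t j - 1)| * |b (t j - 1)|) := by
    apply Finset.sum_le_sum
    intro j hj
    rw [Finset.mem_Icc] at hj
    exact hE1 (t j) (by have := htmem j hj.1 hj.2; omega)
  have hB : ∑ i ∈ Icc 2 n \ (Icc 1 s).image t, (|c i - c (i-1)| - |w i - w (i-1)| * |b (i-1)|)
      ≤ ∑ i ∈ Icc 2 n \ (Icc 1 s).image t, |w i * β i| := by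
    apply Finset.sum_le_sum
    intro i hi
    rw [Finset.mem_sdiff, Finset.mem_Icc] at hi
    have := hE2 i (by omega)
    linarith
  rw [Finset.sum_add_distrib] at hA
  rw [Finset.sum_sub_distrib] at hB
  have hg0 : ∀ i : ℕ, 0 ≤ |w i - w (i-1)| * |b (i-1)| :=
    fun i => mul_nonneg (abs_nonneg _) (abs_nonneg _)
  have hsplit : ∑ i ∈ Icc 2 n \ (Icc 1 s).image t, |w i - w (i-1)| * |b (i-1)|
      + ∑ i ∈ (Icc 1 s).image t, |w i - w (i-1)| * |b (i-1)|
      = ∑ i ∈ Icc 2 n, |w i - w (i-1)| * |b (i-1)| := Finset.sum_sdiff hTsub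
  have himgg := himg (fun i => |w i - w (i-1)| * |b (i-1)|)
  have hgb : ∑ i ∈ Icc 2 n, |w i - w (i-1)| * |b (i-1)|
      ≤ Real.sqrt Dw2 * Real.sqrt (∑ i ∈ Icc 1 n, (b i)^2) := by
    have hcs := Finset.sum_mul_sq_le_sq_mul_sq (Icc 2 n)
      (fun i => |w i - w (i-1)|) (fun i => |b (i-1)|)
    simp only [sq_abs] at hcs
    have hre : ∑ i ∈ Icc 2 n, (b (i-1))^2 ≤ ∑ i ∈ Icc 1 n, (b i)^2 := by
      have h : ∑ i ∈ Icc 2 n, (b (i-1))^2 = ∑ i ∈ Icc 1 (n-1), (b i)^2 := by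
        refine Finset.sum_nbij' (fun i => i - 1) (fun i => i + 1) ?_ ?_ ?_ ?_ ?_
        all_goals simp only [Finset.mem_Icc]
        · intro a ha; omega
        · intro a ha; omega
        · intro a ha; omega
        · intro a ha; omega
        · intro a ha; trivial
      rw [h]
      exact Finset.sum_le_sum_of_subset_of_nonneg
        (Finset.Icc_subset_Icc le_rfl (by omega)) (fun i _ _ => sq_nonneg _)
    have h2 : (∑ i ∈ Icc 2 n, |w i - w (i-1)| * |b (i-1)|)^2
        ≤ Dw2 * ∑ i ∈ Icc 1 n, (b i)^2 := by
      calc (∑ i ∈ Icc 2 n, |w i - w (i-1)| * |b (i-1)|)^2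
          ≤ (∑ i ∈ Icc 2 n, (w i - w (i-1))^2) * ∑ i ∈ Icc 2 n, (b (i-1))^2 := hcs
        _ ≤ Dw2 * ∑ i ∈ Icc 1 n, (b i)^2 := by
            rw [hDw2]
            apply mul_le_mul_of_nonneg_left hre (by positivity)
    have h3 : ∑ i ∈ Icc 2 n, |w i - w (i-1)| * |b (i-1)| ≥ 0 :=
      Finset.sum_nonneg (fun i _ => hg0 i)
    have h4 : 0 ≤ Dw2 * ∑ i ∈ Icc 1 n, (b i)^2 := by
      rw [hDw2]; positivity
    have h5 := (Real.le_sqrt h3 h4).mpr h2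
    rwa [Real.sqrt_mul (by rw [hDw2]; positivity)] at h5
  linarith [hA, hB, hsplit, himgg, hgb, hβ]


/-- Lower bound on the weighted compatibility constant for the path graph:
with weights `w` equal to `1` on `{1} ∪ S` and in `[0,1]` elsewhere,
`κ_w²(S) ≥ ((s+1)/n)·1/(‖w‖_∞ √K + ‖Dw‖₂)² ≥ ((s+1)/n)·1/(2(‖w‖_∞² K + ‖Dw‖₂²))`,
where `D` is the incidence matrix of the path graph and `K` is the constant from the
unweighted lower bound. -/
theorem stmt11 (n s : ℕ) (hn : 1 ≤ n) (hs : 1 ≤ s)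
    (t : ℕ → ℕ)
    (ht : ∀ j, 2 ≤ j → j ≤ s → t (j-1) < t j)
    (htmem : ∀ j, 1 ≤ j → j ≤ s → 2 ≤ t j ∧ t j ≤ n)
    (d u : ℕ → ℕ)
    (hd1 : d 1 = t 1 - 1)
    (hdj : ∀ j, 2 ≤ j → j ≤ s → d j = t j - t (j-1))
    (hds : d (s+1) = n - t s + 1)
    (hd1b : 2 ≤ d 1) (hdsb : 2 ≤ d (s+1))
    (hdjb : ∀ j, 2 ≤ j → j ≤ s → 4 ≤ d j)
    (hu : ∀ j, 2 ≤ j → j ≤ s → 2 ≤ u j ∧ u j ≤ d j - 2)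
    (w : ℕ → ℝ)
    (hw1 : w 1 = 1) (hwS : ∀ j, 1 ≤ j → j ≤ s → w (t j) = 1)
    (hwb : ∀ i, 1 ≤ i → i ≤ n → 0 ≤ w i ∧ w i ≤ 1)
    (K Winf Dw2 : ℝ)
    (hK : K = 1 / (d 1 : ℝ)
        + (∑ j ∈ Finset.Icc 2 s, (1 / (u j : ℝ) + 1 / ((d j : ℝ) - (u j : ℝ))))
        + 1 / (d (s+1) : ℝ))
    (hWinf : Winf = (Finset.Icc 1 n).sup' (Finset.nonempty_Icc.mpr hn) w)
    (hDw2 : Dw2 = ∑ i ∈ Finset.Icc 2 n, (w i - w (i-1))^2) :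
    (∀ β : ℕ → ℝ,
      (∑ j ∈ Finset.Icc 1 s, |w (t j) * β (t j)|
        - ∑ i ∈ Finset.Icc 2 n \ (Finset.Icc 1 s).image t, |w i * β i| = 1) →
      ((s : ℝ) + 1) / n * (1 / (Winf * Real.sqrt K + Real.sqrt Dw2)^2)
        ≤ ((s : ℝ) + 1) * (∑ i ∈ Finset.Icc 1 n, (∑ k ∈ Finset.Icc 1 i, β k)^2) / n) ∧
    ((s : ℝ) + 1) / n * (1 / (2 * (Winf^2 * K + Dw2)))
      ≤ ((s : ℝ) + 1) / n * (1 / (Winf * Real.sqrt K + Real.sqrt Dw2)^2) := by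
  -- Winf = 1
  have hWinf1 : Winf = 1 := by
    rw [hWinf]
    apply le_antisymm
    · apply Finset.sup'_le
      intro i hi
      rw [Finset.mem_Icc] at hi
      exact (hwb i hi.1 hi.2).2
    · have h1 : w 1 ≤ (Finset.Icc 1 n).sup' (Finset.nonempty_Icc.mpr hn) w :=
        Finset.le_sup' w (by simp [hn])
      rw [hw1] at h1; exact h1
  -- K > 0
  have hK0 : 0 < K := by
    rw [hK]
    have h1 : 0 < 1/(d 1:ℝ) := by
      have : (0:ℝ) < (d 1:ℝ) := by exact_mod_cast (by omega : 0 < d 1)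
      positivity
    have h3 : 0 < 1/(d (s+1):ℝ) := by
      have : (0:ℝ) < (d (s+1):ℝ) := by exact_mod_cast (by omega : 0 < d (s+1))
      positivity
    have h2 : 0 ≤ ∑ j ∈ Finset.Icc 2 s, (1 / (u j : ℝ) + 1 / ((d j : ℝ) - (u j : ℝ))) := by
      apply Finset.sum_nonneg
      intro j hj
      rw [Finset.mem_Icc] at hj
      obtain ⟨hu1, hu2⟩ := hu j hj.1 hj.2
      have hdb := hdjb j hj.1 hj.2
      have hUpos : (0:ℝ) < (u j:ℝ) := by exact_mod_cast (by omega : 0 < u j)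
      have hDU : (u j:ℝ) + 2 ≤ (d j:ℝ) := by exact_mod_cast (by omega : u j + 2 ≤ d j)
      have : (0:ℝ) < (d j:ℝ) - (u j:ℝ) := by linarith
      positivity
    linarith
  have hDw0 : 0 ≤ Dw2 := by rw [hDw2]; positivity
  have hsK : 0 < Real.sqrt K := Real.sqrt_pos.mpr hK0
  have hsD : 0 ≤ Real.sqrt Dw2 := Real.sqrt_nonneg _
  have hsn0 : (0:ℝ) ≤ ((s:ℝ)+1)/n := by positivity
  constructor
  · intro β hβ
    have tmono : ∀ j, 1 ≤ j → ∀ k, j < k → k ≤ s → t j < t k := by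
      intro j hj k
      induction k with
      | zero => intro h _; omega
      | succ k ih =>
        intro hjk hk
        have hlt := ht (k+1) (by omega) hk
        rw [Nat.add_sub_cancel] at hlt
        rcases Nat.lt_or_ge j k with h | h
        · exact lt_trans (ih h (by omega)) hlt
        · have hjk' : j = k := by omega
          rw [hjk']; exact hlt
    have htinj : ∀ a ∈ Finset.Icc 1 s, ∀ b' ∈ Finset.Icc 1 s, t a = t b' → a = b' := by
      intro a ha b' hb' hab
      rw [Finset.mem_Icc] at ha hb'
      by_contra hne
      rcases lt_or_gt_of_ne hne with h | h
      · exact absurd hab (Nat.ne_of_lt (tmono a ha.1 b' h hb'.2))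
      · exact absurd hab.symm (Nat.ne_of_lt (tmono b' hb'.1 a h ha.2))
    have hcore := aux_core n s hn hs t ht htmem d u hd1 hdj hds hd1b hdsb hdjb hu K hK hK0
      (fun i => w i * ∑ k ∈ Finset.Icc 1 i, β k)
    have hglue := aux_glue n s t w β (fun i => ∑ k ∈ Finset.Icc 1 i, β k)
      (fun i => w i * ∑ k ∈ Finset.Icc 1 i, β k) (fun i => rfl) (fun i => rfl)
      htmem htinj Dw2 hDw2 hβ
    have hQle : (∑ i ∈ Finset.Icc 1 n, (w i * ∑ k ∈ Finset.Icc 1 i, β k)^2)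
        ≤ ∑ i ∈ Finset.Icc 1 n, (∑ k ∈ Finset.Icc 1 i, β k)^2 := by
      apply Finset.sum_le_sum
      intro i hi
      rw [Finset.mem_Icc] at hi
      obtain ⟨hw0, hw1'⟩ := hwb i hi.1 hi.2
      have hw2 : 0 ≤ 1 - (w i)^2 := by nlinarith
      nlinarith [mul_nonneg hw2 (sq_nonneg (∑ k ∈ Finset.Icc 1 i, β k))]
    have hsq : Real.sqrt (∑ i ∈ Finset.Icc 1 n, (w i * ∑ k ∈ Finset.Icc 1 i, β k)^2)
        ≤ Real.sqrt (∑ i ∈ Finset.Icc 1 n, (∑ k ∈ Finset.Icc 1 i, β k)^2) :=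
      Real.sqrt_le_sqrt hQle
    have h1 : (1:ℝ) ≤ (Real.sqrt K + Real.sqrt Dw2)
        * Real.sqrt (∑ i ∈ Finset.Icc 1 n, (∑ k ∈ Finset.Icc 1 i, β k)^2) := by
      have h2 : Real.sqrt K * Real.sqrt (∑ i ∈ Finset.Icc 1 n, (w i * ∑ k ∈ Finset.Icc 1 i, β k)^2)
          ≤ Real.sqrt K * Real.sqrt (∑ i ∈ Finset.Icc 1 n, (∑ k ∈ Finset.Icc 1 i, β k)^2) :=
        mul_le_mul_of_nonneg_left hsq (Real.sqrt_nonneg K)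
      rw [add_mul]
      linarith [hcore, hglue, h2]
    rw [hWinf1, one_mul]
    have hQb0 : (0:ℝ) ≤ ∑ i ∈ Finset.Icc 1 n, (∑ k ∈ Finset.Icc 1 i, β k)^2 := by positivity
    have hsQb := Real.sq_sqrt hQb0
    have hX : 0 < Real.sqrt K + Real.sqrt Dw2 := by linarith
    have h3 : 1 ≤ (Real.sqrt K + Real.sqrt Dw2)^2
        * ∑ i ∈ Finset.Icc 1 n, (∑ k ∈ Finset.Icc 1 i, β k)^2 := by
      nlinarith [sq_nonneg ((Real.sqrt K + Real.sqrt Dw2)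
        * Real.sqrt (∑ i ∈ Finset.Icc 1 n, (∑ k ∈ Finset.Icc 1 i, β k)^2) - 1), hsQb, h1]
    have h4 : 1/(Real.sqrt K + Real.sqrt Dw2)^2
        ≤ ∑ i ∈ Finset.Icc 1 n, (∑ k ∈ Finset.Icc 1 i, β k)^2 := by
      rw [div_le_iff₀ (by positivity)]
      linarith
    calc ((s:ℝ)+1)/n * (1/(Real.sqrt K + Real.sqrt Dw2)^2)
        ≤ ((s:ℝ)+1)/n * ∑ i ∈ Finset.Icc 1 n, (∑ k ∈ Finset.Icc 1 i, β k)^2 :=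
          mul_le_mul_of_nonneg_left h4 hsn0
      _ = ((s:ℝ)+1) * (∑ i ∈ Finset.Icc 1 n, (∑ k ∈ Finset.Icc 1 i, β k)^2)/n := by ring
  · rw [hWinf1, one_mul, one_pow, one_mul]
    apply mul_le_mul_of_nonneg_left _ hsn0
    have h2 : (Real.sqrt K + Real.sqrt Dw2)^2 ≤ 2*(K + Dw2) := by
      nlinarith [Real.sq_sqrt hK0.le, Real.sq_sqrt hDw0,
        sq_nonneg (Real.sqrt K - Real.sqrt Dw2)]
    have hpos : 0 < (Real.sqrt K + Real.sqrt Dw2)^2 := by positivity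
    exact one_div_le_one_div_of_le hpos h2
end

section
/- For any integer b ≥ 2 and 1 ≤ i ≤ b, with a_i = √(i(b-i)/b) and a_{i-1} = √((i-1)(b-(i-1))/b), one has (a_i - a_{i-1})² ≤ (b+1-2i)² / (b·(-2i² + 2(b+1)i - (b+1))), and consequently Σ_{i=1}^{b} (a_i - a_{i-1})² ≤ (5/2)·log(⌈b/2⌉·⌊b/2⌋) whenever b ≥ 4. -/
open Finset

private lemma sqrt_diff_sq_le {x y : ℝ} (hx : 0 ≤ x) (hy : 0 ≤ y) (hxy : 0 < x + y) :
    (Real.sqrt x - Real.sqrt y)^2 ≤ (x - y)^2 / (x + y) := by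
  rw [le_div_iff₀ hxy]
  have h1 := Real.sq_sqrt hx
  have h2 := Real.sq_sqrt hy
  have h5 : 0 ≤ Real.sqrt x * Real.sqrt y :=
    mul_nonneg (Real.sqrt_nonneg x) (Real.sqrt_nonneg y)
  nlinarith [mul_nonneg (sq_nonneg (Real.sqrt x - Real.sqrt y)) h5]

private lemma D_pos {b x : ℝ} (hb : 2 ≤ b) (hx : 1 ≤ x) (hxb : x ≤ b) :
    0 < -2*x^2 + 2*(b+1)*x - (b+1) := by
  nlinarith [mul_nonneg (sub_nonneg.2 hx) (sub_nonneg.2 hxb)]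

private lemma poly_bound {b x : ℝ} (hb : 2 ≤ b) (hx : 1 ≤ x) (hxb : 2*x ≤ b+1) :
    4*x*(b+1-2*x)^2 ≤ 5*(b*(-2*x^2 + 2*(b+1)*x - (b+1))) := by
  nlinarith [mul_nonneg (mul_nonneg (sub_nonneg.2 hx) (sub_nonneg.2 hx))
      (by linarith : (0:ℝ) ≤ b+1-2*x),
    mul_nonneg (sub_nonneg.2 hx) (by linarith : (0:ℝ) ≤ b+1-2*x),
    sq_nonneg (b+1-2*x), mul_nonneg (sub_nonneg.2 hx) (sq_nonneg (b+1-2*x)),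
    mul_nonneg (sub_nonneg.2 hx) (by linarith : (0:ℝ) ≤ b - x),
    mul_nonneg (mul_nonneg (sub_nonneg.2 hx) (sub_nonneg.2 hx)) (by linarith : (0:ℝ) ≤ b - x)]

private lemma tel (φ : ℕ → ℝ) : ∀ C, 2 ≤ C → ∑ i ∈ Icc 2 C, (φ i - φ (i-1)) = φ C - φ 1 := by
  intro C hC
  induction C with
  | zero => omega
  | succ n ih =>
    rcases Nat.lt_or_ge n 2 with h | h
    · interval_cases n
      · omega
      · simp
    · rw [Finset.sum_Icc_succ_top (by omega), ih h]
      simp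

private lemma step (b : ℕ) (hb : 2 ≤ b) (a : ℕ → ℝ)
    (ha : ∀ i : ℕ, a i = Real.sqrt ((i : ℝ) * ((b : ℝ) - i) / b)) (i : ℕ)
    (h1 : 1 ≤ i) (h2 : i ≤ b) :
    (a i - a (i-1))^2
      ≤ ((b : ℝ) + 1 - 2*i)^2
          / ((b : ℝ) * (-2*(i : ℝ)^2 + 2*((b : ℝ)+1)*(i : ℝ) - ((b : ℝ)+1))) := by
  have hb' : (2:ℝ) ≤ b := by exact_mod_cast hb
  have hb0 : (0:ℝ) < b := by linarith
  have hx1 : (1:ℝ) ≤ (i:ℝ) := by exact_mod_cast h1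
  have hxb : (i:ℝ) ≤ b := by exact_mod_cast h2
  have hcast : ((i-1:ℕ):ℝ) = (i:ℝ) - 1 := by
    have := Nat.cast_sub (R := ℝ) h1; simpa using this
  have hxnn : 0 ≤ (i:ℝ) * ((b:ℝ) - i) / b := by
    apply div_nonneg _ (le_of_lt hb0); nlinarith
  have hynn : 0 ≤ ((i:ℝ)-1) * ((b:ℝ) - ((i:ℝ)-1)) / b := by
    apply div_nonneg _ (le_of_lt hb0); nlinarith
  have hD : 0 < -2*(i:ℝ)^2 + 2*((b:ℝ)+1)*(i:ℝ) - ((b:ℝ)+1) := D_pos hb' hx1 hxb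
  have hsum : (i:ℝ) * ((b:ℝ) - i) / b + ((i:ℝ)-1) * ((b:ℝ) - ((i:ℝ)-1)) / b
      = (-2*(i:ℝ)^2 + 2*((b:ℝ)+1)*(i:ℝ) - ((b:ℝ)+1)) / b := by
    field_simp; ring
  have hsum' : 0 < (i:ℝ) * ((b:ℝ) - i) / b + ((i:ℝ)-1) * ((b:ℝ) - ((i:ℝ)-1)) / b := by
    rw [hsum]; exact div_pos hD hb0
  have hax : a i = Real.sqrt ((i:ℝ) * ((b:ℝ) - i) / b) := ha i
  have hay : a (i-1) = Real.sqrt (((i:ℝ)-1) * ((b:ℝ) - ((i:ℝ)-1)) / b) := by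
    rw [ha (i-1), hcast]
  rw [hax, hay]
  refine (sqrt_diff_sq_le hxnn hynn hsum').trans (le_of_eq ?_)
  rw [hsum]
  have hxy : (i:ℝ) * ((b:ℝ) - i) / b - ((i:ℝ)-1) * ((b:ℝ) - ((i:ℝ)-1)) / b
      = ((b:ℝ)+1-2*i)/b := by field_simp; ring
  rw [hxy, div_pow, div_div_eq_mul_div, div_mul_eq_mul_div, div_div,
    show ((b:ℝ))^2 * (-2*(i:ℝ)^2 + 2*((b:ℝ)+1)*(i:ℝ) - ((b:ℝ)+1))
      = (b:ℝ) * ((b:ℝ) * (-2*(i:ℝ)^2 + 2*((b:ℝ)+1)*(i:ℝ) - ((b:ℝ)+1))) from by ring,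
    show ((b:ℝ)+1-2*(i:ℝ))^2 * (b:ℝ) = (b:ℝ) * ((b:ℝ)+1-2*(i:ℝ))^2 from by ring,
    mul_div_mul_left _ _ hb0.ne']

private lemma log_ratio {i : ℕ} (hi : 2 ≤ i) :
    1 / (i:ℝ) ≤ Real.log i - Real.log ((i-1 : ℕ) : ℝ) := by
  have h0 : (0:ℝ) < (i:ℝ) := by
    have : (2:ℝ) ≤ i := by exact_mod_cast hi
    linarith
  have h1 : ((i-1:ℕ):ℝ) = (i:ℝ) - 1 := by
    have := Nat.cast_sub (R := ℝ) (by omega : 1 ≤ i); simpa using this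
  have h2 : (0:ℝ) < (i:ℝ) - 1 := by
    have : (2:ℝ) ≤ i := by exact_mod_cast hi
    linarith
  have hlog := Real.log_le_sub_one_of_pos (x := ((i:ℝ)-1)/i) (by positivity)
  rw [Real.log_div h2.ne' h0.ne'] at hlog
  have heq : ((i:ℝ)-1)/i - 1 = -(1/i) := by field_simp; ring
  rw [h1]
  linarith [heq ▸ hlog]

private lemma log_three : (4:ℝ)/5 ≤ Real.log 3 := by
  have h2 := Real.log_two_gt_d9
  have hlog := Real.log_le_sub_one_of_pos (x := (2:ℝ)/3) (by norm_num)
  rw [Real.log_div (by norm_num) (by norm_num)] at hlog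
  have : Real.log 2 - Real.log 3 ≤ -(1:ℝ)/3 := by linarith [hlog]; 
  linarith



/-- With `a_i = √(i(b-i)/b)`: the squared consecutive differences satisfy
`(a_i - a_{i-1})² ≤ (b+1-2i)²/(b(-2i² + 2(b+1)i - (b+1)))` for `1 ≤ i ≤ b`, and
consequently `Σ_{i=1}^b (a_i - a_{i-1})² ≤ (5/2)·log(⌈b/2⌉·⌊b/2⌋)` whenever `b ≥ 4`. -/
theorem stmt12 (b : ℕ) (hb : 2 ≤ b) (a : ℕ → ℝ)
    (ha : ∀ i : ℕ, a i = Real.sqrt ((i : ℝ) * ((b : ℝ) - i) / b)) :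
    (∀ i : ℕ, 1 ≤ i → i ≤ b →
      (a i - a (i-1))^2
        ≤ ((b : ℝ) + 1 - 2*i)^2
            / ((b : ℝ) * (-2*(i : ℝ)^2 + 2*((b : ℝ)+1)*(i : ℝ) - ((b : ℝ)+1)))) ∧
    (4 ≤ b → ∑ i ∈ Finset.Icc 1 b, (a i - a (i-1))^2
        ≤ (5/2) * Real.log ((((b+1)/2 * (b/2) : ℕ) : ℝ))) := by
  have hstep := step b hb a ha
  refine ⟨fun i h1 h2 => hstep i h1 h2, fun hb4 => ?_⟩
  have hb0 : (0:ℝ) < b := by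
    have : (2:ℝ) ≤ b := by exact_mod_cast hb
    linarith
  set Cn := (b+1)/2 with hCn
  set Fn := b/2 with hFn
  have hC2 : 2 ≤ Cn := by omega
  have hF2 : 2 ≤ Fn := by omega
  have hFC : Fn ≤ Cn := by omega
  have hCb : Cn ≤ b := by omega
  -- symmetry of a
  have hsym : ∀ m : ℕ, m ≤ b → a m = a (b - m) := by
    intro m hm
    rw [ha, ha]
    congr 1
    have hc : ((b-m:ℕ):ℝ) = (b:ℝ) - m := by
      have := Nat.cast_sub (R := ℝ) hm; simpa using this
    rw [hc]; ring
  -- split the sum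
  have hsplit : ∑ i ∈ Finset.Icc 1 b, (a i - a (i-1))^2
      = ∑ i ∈ Finset.Icc 1 Cn, (a i - a (i-1))^2
        + ∑ i ∈ Finset.Icc (Cn+1) b, (a i - a (i-1))^2 := by
    rw [← Finset.sum_union (by
      rw [Finset.disjoint_left]
      intro z hz hz'
      simp only [Finset.mem_Icc] at hz hz'
      omega)]
    congr 1
    ext z
    simp only [Finset.mem_Icc, Finset.mem_union]
    omega
  -- reindex the second sum
  have hre : ∑ i ∈ Finset.Icc (Cn+1) b, (a i - a (i-1))^2
      = ∑ j ∈ Finset.Icc 1 Fn, (a j - a (j-1))^2 := by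
    apply Finset.sum_nbij' (i := fun i => b+1-i) (j := fun j => b+1-j)
    · intro x hx
      simp only [Finset.mem_Icc] at hx ⊢
      omega
    · intro x hx
      simp only [Finset.mem_Icc] at hx ⊢
      omega
    · intro x hx
      simp only [Finset.mem_Icc] at hx
      omega
    · intro x hx
      simp only [Finset.mem_Icc] at hx
      omega
    · intro x hx
      simp only [Finset.mem_Icc] at hx
      have e1 : b+1-x = b - (x-1) := by omega
      have e2 : b+1-x-1 = b - x := by omega
      rw [e2, e1, hsym x (by omega), hsym (x-1) (by omega)]
      ring
  have hmono : ∑ j ∈ Finset.Icc 1 Fn, (a j - a (j-1))^2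
      ≤ ∑ i ∈ Finset.Icc 1 Cn, (a i - a (i-1))^2 :=
    Finset.sum_le_sum_of_subset_of_nonneg (Finset.Icc_subset_Icc_right hFC)
      (fun i _ _ => sq_nonneg _)
  -- tail terms bound
  have htail : ∀ i ∈ Finset.Icc 2 Cn, (a i - a (i-1))^2
      ≤ 5/4 * (Real.log i - Real.log ((i-1:ℕ):ℝ)) := by
    intro i hi
    simp only [Finset.mem_Icc] at hi
    have hi1 : 1 ≤ i := by omega
    have hib : i ≤ b := by omega
    have hi0 : (0:ℝ) < i := by
      have : (1:ℝ) ≤ i := by exact_mod_cast hi1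
      linarith
    have hD := D_pos (b := (b:ℝ)) (x := (i:ℝ)) (by exact_mod_cast hb)
      (by exact_mod_cast hi1) (by exact_mod_cast hib)
    calc (a i - a (i-1))^2 ≤ _ := hstep i hi1 hib
      _ ≤ 5/4 * (1/(i:ℝ)) := by
          have hpb := poly_bound (b := (b:ℝ)) (x := (i:ℝ)) (by exact_mod_cast hb)
            (by exact_mod_cast hi1) (by exact_mod_cast (by omega : 2*i ≤ b+1))
          rw [show (5:ℝ)/4 * (1/(i:ℝ)) = 5/(4*(i:ℝ)) from by field_simp]
          rw [div_le_div_iff₀ (mul_pos hb0 hD) (by linarith)]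
          nlinarith [hpb]
      _ ≤ 5/4 * (Real.log i - Real.log ((i-1:ℕ):ℝ)) := by
          have := log_ratio hi.1
          have h14 : (0:ℝ) ≤ 5/4 := by norm_num
          nlinarith [this]
  have hsum2 : ∑ i ∈ Finset.Icc 2 Cn, (a i - a (i-1))^2 ≤ 5/4 * Real.log Cn := by
    have htel := tel (fun n => Real.log (n:ℝ)) Cn hC2
    calc ∑ i ∈ Finset.Icc 2 Cn, (a i - a (i-1))^2
        ≤ ∑ i ∈ Finset.Icc 2 Cn, 5/4 * (Real.log i - Real.log ((i-1:ℕ):ℝ)) :=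
          Finset.sum_le_sum htail
      _ = 5/4 * ∑ i ∈ Finset.Icc 2 Cn, (Real.log (i:ℝ) - Real.log ((i-1:ℕ):ℝ)) := by
          rw [Finset.mul_sum]
      _ = 5/4 * (Real.log (Cn:ℝ) - Real.log ((1:ℕ):ℝ)) := by rw [htel]
      _ = 5/4 * Real.log Cn := by norm_num
  -- first term
  have hs1 : (a 1 - a 0)^2 = ((b:ℝ)-1)/b := by
    have h00 : a 0 = 0 := by rw [ha]; simp
    have h11 : a 1 = Real.sqrt (((b:ℝ)-1)/b) := by rw [ha]; norm_num
    rw [h00, h11, sub_zero, Real.sq_sqrt]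
    apply div_nonneg _ (le_of_lt hb0)
    have : (2:ℝ) ≤ b := by exact_mod_cast hb
    linarith
  have hlog2 := Real.log_two_gt_d9
  have hs1b : 2 * (((b:ℝ)-1)/b) ≤ 5/2 * Real.log (Fn:ℝ) := by
    rcases Nat.lt_or_ge b 6 with h6 | h6
    · have hF : Fn = 2 := by omega
      have hb5 : (b:ℝ) ≤ 5 := by exact_mod_cast (by omega : b ≤ 5)
      have h85 : 2 * (((b:ℝ)-1)/b) ≤ 8/5 := by
        rw [show 2 * (((b:ℝ)-1)/b) = (2*((b:ℝ)-1))/b from by ring, div_le_iff₀ hb0]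
        linarith
      rw [hF]
      have : ((2:ℕ):ℝ) = (2:ℝ) := by norm_num
      rw [this]
      nlinarith [hlog2]
    · have hF3 : 3 ≤ Fn := by omega
      have hmon : Real.log 3 ≤ Real.log (Fn:ℝ) :=
        Real.log_le_log (by norm_num) (by exact_mod_cast hF3)
      have h3 := log_three
      have h2b : 2 * (((b:ℝ)-1)/b) ≤ 2 := by
        rw [show 2 * (((b:ℝ)-1)/b) = (2*((b:ℝ)-1))/b from by ring, div_le_iff₀ hb0]
        linarith
      linarith
  -- assemble
  have hins : Finset.Icc 1 Cn = insert 1 (Finset.Icc 2 Cn) := by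
    ext z; simp only [Finset.mem_Icc, Finset.mem_insert]; omega
  have h1notin : (1:ℕ) ∉ Finset.Icc 2 Cn := by simp
  have hSC : ∑ i ∈ Finset.Icc 1 Cn, (a i - a (i-1))^2
      ≤ ((b:ℝ)-1)/b + 5/4 * Real.log (Cn:ℝ) := by
    rw [hins, Finset.sum_insert h1notin]
    have : (a 1 - a (1-1))^2 = ((b:ℝ)-1)/b := hs1
    linarith [hsum2]
  rw [hsplit, hre]
  have hC0 : ((Cn:ℕ):ℝ) ≠ 0 := by
    have : (2:ℝ) ≤ (Cn:ℝ) := by exact_mod_cast hC2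
    linarith
  have hF0 : ((Fn:ℕ):ℝ) ≠ 0 := by
    have : (2:ℝ) ≤ (Fn:ℝ) := by exact_mod_cast hF2
    linarith
  rw [show ((Cn*Fn:ℕ):ℝ) = (Cn:ℝ)*(Fn:ℝ) from by push_cast; ring,
    Real.log_mul hC0 hF0]
  linarith [hmono, hSC, hs1b]
end

section
/- Let X ∈ ℝ^{n×n} with first column X₁ = (1,…,1)', let S₀ ⊆ {2,…,n}, and suppose X_{{1}∪S₀} has full column rank. Write A₁ = I_n - X₁(X₁'X₁)⁻¹X₁' and R = {1,…,n} \ ({1} ∪ S₀). Then for any sign vector z⁰_{S₀} ∈ {−1,1}^{|S₀|}, letting z⁰_{{1}∪S₀} = (0, z⁰_{S₀})', one has ‖X_R' X_{{1}∪S₀}(X_{{1}∪S₀}'X_{{1}∪S₀})⁻¹ z⁰_{{1}∪S₀}‖_∞ = ‖X_R' A₁ X_{S₀}(X_{S₀}'A₁X_{S₀})⁻¹ z⁰_{S₀}‖_∞. -/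
open Matrix

/-- For the Edge Lasso on a tree, the irrepresentable condition can be checked with the
unpenalized first coefficient absorbed: with `X₁` the all-ones first column, `A₁` the
antiprojection onto its span, and `z⁰` a sign vector on `S₀` extended by `0` at index `1`,
`‖X_R' X_{{1}∪S₀}(X_{{1}∪S₀}'X_{{1}∪S₀})⁻¹ z⁰_{{1}∪S₀}‖_∞
  = ‖X_R' A₁ X_{S₀}(X_{S₀}'A₁X_{S₀})⁻¹ z⁰_{S₀}‖_∞`. -/
theorem stmt16 (n : ℕ) (hn : 1 ≤ n)
    (X : Matrix (Fin n) (Fin n) ℝ)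
    (hX1 : ∀ i, X i ⟨0, hn⟩ = 1)
    (S0 : Finset (Fin n)) (hS0 : (⟨0, hn⟩ : Fin n) ∉ S0)
    (z : Fin n → ℝ) (hz0 : z ⟨0, hn⟩ = 0)
    (hzsgn : ∀ i ∈ S0, z i = 1 ∨ z i = -1) :
    let T : Finset (Fin n) := insert ⟨0, hn⟩ S0
    let R : Finset (Fin n) := Finset.univ \ T
    let XT : Matrix (Fin n) {x // x ∈ T} ℝ := Matrix.of fun i j => X i j.val
    let XS : Matrix (Fin n) {x // x ∈ S0} ℝ := Matrix.of fun i j => X i j.val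
    let XR : Matrix (Fin n) {x // x ∈ R} ℝ := Matrix.of fun i j => X i j.val
    let X1 : Matrix (Fin n) (Fin 1) ℝ := Matrix.of fun i _ => X i ⟨0, hn⟩
    let A1 : Matrix (Fin n) (Fin n) ℝ := 1 - X1 * (X1ᵀ * X1)⁻¹ * X1ᵀ
    IsUnit (XTᵀ * XT) → IsUnit (XSᵀ * A1 * XS) →
    (⨆ r : {x // x ∈ R}, |((XRᵀ * XT * (XTᵀ * XT)⁻¹).mulVec fun j => z j.val) r|)
      = ⨆ r : {x // x ∈ R},
          |((XRᵀ * A1 * XS * (XSᵀ * A1 * XS)⁻¹).mulVec fun j => z j.val) r| := by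
  intro T R XT XS XR X1 A1 hT hS
  have hdetT : IsUnit (XTᵀ * XT).det := (Matrix.isUnit_iff_isUnit_det _).mp hT
  have hdetS : IsUnit (XSᵀ * A1 * XS).det := (Matrix.isUnit_iff_isUnit_det _).mp hS
  have hdet1 : IsUnit (X1ᵀ * X1).det := by
    have hd : (X1ᵀ * X1).det = (n : ℝ) := by
      rw [Matrix.det_fin_one]
      simp [Matrix.mul_apply, X1, hX1]
    rw [hd]
    exact isUnit_iff_ne_zero.mpr (Nat.cast_ne_zero.mpr (by omega))
  have hX1A1 : X1ᵀ * A1 = 0 := by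
    show X1ᵀ * (1 - X1 * (X1ᵀ * X1)⁻¹ * X1ᵀ) = 0
    rw [Matrix.mul_sub, Matrix.mul_one, ← Matrix.mul_assoc, ← Matrix.mul_assoc,
      Matrix.mul_nonsing_inv _ hdet1, Matrix.one_mul, sub_self]
  set zT : {x // x ∈ T} → ℝ := fun j => z j.val with hzT
  set zS : {x // x ∈ S0} → ℝ := fun j => z j.val with hzS
  set u : {x // x ∈ S0} → ℝ := (XSᵀ * A1 * XS)⁻¹.mulVec zS with hu
  set y : Fin n → ℝ := XS.mulVec u with hy
  set v : Fin n → ℝ := A1.mulVec y with hv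
  set svec : Fin 1 → ℝ := (X1ᵀ * X1)⁻¹.mulVec (X1ᵀ.mulVec y) with hsvec
  set w : {x // x ∈ T} → ℝ :=
    fun j => if h : (j : Fin n) ∈ S0 then u ⟨j, h⟩ else -svec 0 with hw
  -- v = y - X1.mulVec svec
  have hvy : v = y - X1.mulVec svec := by
    show (1 - X1 * (X1ᵀ * X1)⁻¹ * X1ᵀ).mulVec y = _
    rw [Matrix.sub_mulVec, Matrix.one_mulVec]
    congr 1
    rw [← Matrix.mulVec_mulVec, ← Matrix.mulVec_mulVec]
  -- XT.mulVec w = v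
  have hvw : XT.mulVec w = v := by
    funext i
    have hsum : XT.mulVec w i
        = ∑ a ∈ T, X i a * (if h : a ∈ S0 then u ⟨a, h⟩ else -svec 0) := by
      rw [Matrix.mulVec, dotProduct]
      rw [← Finset.sum_attach T (fun a => X i a * (if h : a ∈ S0 then u ⟨a, h⟩ else -svec 0))]
      rfl
    rw [hsum, Finset.sum_insert hS0, dif_neg hS0]
    have h2 : ∑ a ∈ S0, X i a * (if h : a ∈ S0 then u ⟨a, h⟩ else -svec 0)
        = y i := by
      rw [← Finset.sum_attach S0 (fun a => X i a * (if h : a ∈ S0 then u ⟨a, h⟩ else -svec 0))]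
      rw [hy, Matrix.mulVec, dotProduct]
      exact Finset.sum_congr rfl (fun j _ => by rw [dif_pos j.prop]; rfl)
    rw [h2, hvy]
    have hX1s : X1.mulVec svec i = X i ⟨0, hn⟩ * svec 0 := by
      rw [Matrix.mulVec, dotProduct]
      simp [X1]
    simp only [Pi.sub_apply, hX1s]
    ring
  -- XTᵀ.mulVec v = zT
  have hXTv : XTᵀ.mulVec v = zT := by
    have hX1v : X1ᵀ.mulVec v = 0 := by
      rw [hv, Matrix.mulVec_mulVec, hX1A1, Matrix.zero_mulVec]
    have hXSv : XSᵀ.mulVec v = zS := by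
      rw [hv, hy, hu, Matrix.mulVec_mulVec, Matrix.mulVec_mulVec, Matrix.mulVec_mulVec]
      rw [show XSᵀ * A1 * XS * (XSᵀ * A1 * XS)⁻¹ = 1 from Matrix.mul_nonsing_inv _ hdetS,
        Matrix.one_mulVec]
    funext j
    rcases Finset.mem_insert.mp j.prop with h0 | hmem
    · have : XTᵀ.mulVec v j = X1ᵀ.mulVec v 0 := by
        rw [Matrix.mulVec, Matrix.mulVec, dotProduct, dotProduct]
        exact Finset.sum_congr rfl (fun i _ => by
          simp [XT, X1, Matrix.transpose_apply, h0])
      rw [this, hX1v]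
      show (0 : ℝ) = zT j
      rw [hzT]
      show (0:ℝ) = z j.val
      rw [h0, hz0]
    · have : XTᵀ.mulVec v j = XSᵀ.mulVec v ⟨j.val, hmem⟩ := by
        rw [Matrix.mulVec, Matrix.mulVec, dotProduct, dotProduct]
        rfl
      rw [this, hXSv]
  have h2 : (XTᵀ * XT).mulVec w = zT := by
    rw [← Matrix.mulVec_mulVec, hvw, hXTv]
  have h3 : (XTᵀ * XT)⁻¹.mulVec zT = w := by
    rw [← h2, Matrix.mulVec_mulVec, Matrix.nonsing_inv_mul _ hdetT, Matrix.one_mulVec]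
  have key : (XRᵀ * XT * (XTᵀ * XT)⁻¹).mulVec zT
      = (XRᵀ * A1 * XS * (XSᵀ * A1 * XS)⁻¹).mulVec zS := by
    rw [← Matrix.mulVec_mulVec, ← Matrix.mulVec_mulVec, h3, hvw,
      ← Matrix.mulVec_mulVec, ← Matrix.mulVec_mulVec, ← Matrix.mulVec_mulVec, ← hu, ← hy, ← hv]
  rw [key]
end

section
/- For b* ≥ 1 and integer x with 3 ≤ x ≤ b*−3, the quantity (√((b*−1)/b*) − √((b*−x+1)(x−1)/b*))² is maximized at x = (b*+2)/2 (when this is an admissible value) with maximum (1/b*)(b*/2 − √(b*−1))², and this maximum is at most b*/4. -/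
lemma aux18 (b : ℝ) (hb : 1 ≤ b) :
    (Real.sqrt (b/4) - Real.sqrt ((b-1)/b))^2 = (1/b) * (b/2 - Real.sqrt (b-1))^2 := by
  have hb0 : (0:ℝ) < b := by linarith
  have h1 : Real.sqrt (b/4) = Real.sqrt b / 2 := by
    rw [Real.sqrt_div hb0.le, show (4:ℝ) = 2^2 by norm_num, Real.sqrt_sq (by norm_num : (0:ℝ) ≤ 2)]
  have h2 : Real.sqrt ((b-1)/b) = Real.sqrt (b-1) / Real.sqrt b := by
    rw [Real.sqrt_div (by linarith)]
  have hsb : Real.sqrt b ≠ 0 := by positivity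
  have hsq : Real.sqrt b ^ 2 = b := Real.sq_sqrt hb0.le
  rw [h1, h2]
  have e1 : (Real.sqrt b/2 - Real.sqrt (b-1)/Real.sqrt b) * Real.sqrt b
      = b/2 - Real.sqrt (b-1) := by
    field_simp
    ring_nf
    rw [hsq]
  have e2 : (Real.sqrt b/2 - Real.sqrt (b-1)/Real.sqrt b)^2 = (b/2 - Real.sqrt (b-1))^2 / b := by
    rw [← e1, mul_pow, hsq, mul_div_assoc, div_self hb0.ne', mul_one]
  rw [e2]; ring

/-- For `b* ≥ 1` and integer `x` with `3 ≤ x ≤ b*-3`, the quantity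
`(√((b*-1)/b*) - √((b*-x+1)(x-1)/b*))²` is at most `(1/b*)(b*/2 - √(b*-1))²`
(with equality at the admissible value `x = (b*+2)/2`), and this maximum is at most
`b*/4`. -/
theorem stmt18 (b : ℝ) (hb : 1 ≤ b) :
    (∀ x : ℤ, 3 ≤ (x : ℝ) → (x : ℝ) ≤ b - 3 →
      (Real.sqrt ((b-1)/b) - Real.sqrt ((b - x + 1) * ((x : ℝ) - 1) / b))^2
        ≤ (1/b) * (b/2 - Real.sqrt (b-1))^2) ∧
    ((3 ≤ (b+2)/2 → (b+2)/2 ≤ b - 3 →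
      (Real.sqrt ((b-1)/b) - Real.sqrt ((b - (b+2)/2 + 1) * ((b+2)/2 - 1) / b))^2
        = (1/b) * (b/2 - Real.sqrt (b-1))^2)) ∧
    (1/b) * (b/2 - Real.sqrt (b-1))^2 ≤ b/4 := by
  have hb0 : (0:ℝ) < b := by linarith
  refine ⟨?_, ?_, ?_⟩
  · intro x h3 hx
    set y : ℝ := (x : ℝ)
    have hb6 : (6:ℝ) ≤ b := by linarith
    have hp1 : b - 1 ≤ (b - y + 1) * (y - 1) := by nlinarith [mul_nonneg (by linarith : (0:ℝ) ≤ y - 3) (by linarith : (0:ℝ) ≤ b - 3 - y)]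
    have hp2 : (b - y + 1) * (y - 1) ≤ b^2/4 := by nlinarith [sq_nonneg (b - 2*y + 2)]
    have hle : Real.sqrt ((b-1)/b) ≤ Real.sqrt ((b - y + 1) * (y - 1) / b) :=
      Real.sqrt_le_sqrt (by apply div_le_div_of_nonneg_right hp1 hb0.le)
    have hub : Real.sqrt ((b - y + 1) * (y - 1) / b) ≤ Real.sqrt (b/4) :=
      Real.sqrt_le_sqrt (by rw [div_le_div_iff₀ hb0 (by norm_num : (0:ℝ) < 4)]; nlinarith)
    rw [← aux18 b hb, show (Real.sqrt ((b-1)/b) - Real.sqrt ((b - y + 1) * (y - 1) / b))^2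
        = (Real.sqrt ((b - y + 1) * (y - 1) / b) - Real.sqrt ((b-1)/b))^2 by ring]
    have ha : 0 ≤ Real.sqrt ((b - y + 1) * (y - 1) / b) - Real.sqrt ((b-1)/b) := by linarith
    exact pow_le_pow_left₀ ha (by linarith) 2
  · intro h3 hx
    have : (b - (b+2)/2 + 1) * ((b+2)/2 - 1) / b = b/4 := by field_simp; ring
    rw [this, ← aux18 b hb]; ring
  · have hs0 : 0 ≤ Real.sqrt (b-1) := Real.sqrt_nonneg _
    have hs1 : Real.sqrt (b-1) ≤ b/2 := by
      rw [show b/2 = Real.sqrt ((b/2)^2) from (Real.sqrt_sq (by linarith)).symm]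
      exact Real.sqrt_le_sqrt (by nlinarith [sq_nonneg (b-2)])
    rw [div_mul_eq_mul_div, one_mul, div_le_iff₀ hb0]
    nlinarith
end
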